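/- arXiv:1710.02744 — 6 statements merged into one kernel-verified Lean document; each statement's English description precedes it below -/
import Mathlib

section
/- Let n ≥ 1, let b be a lattice bridge of length n, and let r ∈ {1,…,n} be minimal such that b(r) = min{b(i) : 0 ≤ i ≤ n}. Then the cyclic shift b^(r) is a first passage bridge, and r is the unique element k of {1,…,n} for which b^(k) is a first passage bridge. -/
/-- A lattice bridge of length `n`: integers `b 0, …, b n` with `b 0 = 0`,
`b n = -1`, and all increments at least `-1`. -/
def IsLatticeBridge (n : ℕ) (b : ℕ → ℤ) : Prop :=
  b 0 = 0 ∧ b n = -1 ∧ ∀ i < n, b (i + 1) - b i ≥ -1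

/-- A first passage bridge: a lattice bridge that first hits `-1` at time `n`. -/
def IsFirstPassageBridge (n : ℕ) (b : ℕ → ℤ) : Prop :=
  IsLatticeBridge n b ∧ ∀ i, 1 ≤ i → i < n → b i ≠ -1

/-- The extension of a lattice bridge: `b (n + i) = b i - 1` for `1 ≤ i ≤ n`. -/
def extBridge (n : ℕ) (b : ℕ → ℤ) (i : ℕ) : ℤ :=
  if i ≤ n then b i else b (i - n) - 1

/-- The cyclic shift `b^(k)` of a lattice bridge. -/
def shiftBridge (n : ℕ) (b : ℕ → ℤ) (k : ℕ) (i : ℕ) : ℤ :=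
  extBridge n b (k + i) - extBridge n b k

lemma ext_of_le (n : ℕ) (b : ℕ → ℤ) {i : ℕ} (h : i ≤ n) : extBridge n b i = b i :=
  if_pos h

lemma ext_of_gt (n : ℕ) (b : ℕ → ℤ) {i : ℕ} (h : n < i) :
    extBridge n b i = b (i - n) - 1 :=
  if_neg (by omega)

lemma ext_step (n : ℕ) (b : ℕ → ℤ) (hb : IsLatticeBridge n b) (hn : 1 ≤ n)
    {i : ℕ} (h : i < 2 * n) : extBridge n b (i + 1) - extBridge n b i ≥ -1 := by
  obtain ⟨h0, hN, hstep⟩ := hb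
  rcases lt_trichotomy i n with hlt | heq | hgt
  · rw [ext_of_le n b (by omega), ext_of_le n b (by omega)]
    exact hstep i hlt
  · rw [heq, ext_of_gt n b (by omega), ext_of_le n b le_rfl]
    have h1 : n + 1 - n = 1 := by omega
    rw [h1, hN]
    have := hstep 0 hn
    rw [h0] at this
    linarith
  · rw [ext_of_gt n b (by omega), ext_of_gt n b hgt]
    have h1 : i + 1 - n = (i - n) + 1 := by omega
    rw [h1]
    have := hstep (i - n) (by omega)
    linarith

lemma shift_lattice (n : ℕ) (b : ℕ → ℤ) (hb : IsLatticeBridge n b) (hn : 1 ≤ n)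
    {k : ℕ} (hk1 : 1 ≤ k) (hkn : k ≤ n) : IsLatticeBridge n (shiftBridge n b k) := by
  refine ⟨by simp [shiftBridge], ?_, ?_⟩
  · rw [shiftBridge, ext_of_gt n b (by omega), ext_of_le n b hkn]
    have h1 : k + n - n = k := by omega
    rw [h1]; ring
  · intro i hi
    have h1 : k + (i + 1) = (k + i) + 1 := by omega
    rw [shiftBridge, shiftBridge, h1]
    have := ext_step n b hb hn (i := k + i) (by omega)
    linarith

theorem stmt0 (n : ℕ) (hn : 1 ≤ n) (b : ℕ → ℤ) (hb : IsLatticeBridge n b)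
    (r : ℕ) (hr1 : 1 ≤ r) (hrn : r ≤ n)
    (hrmin : ∀ i ≤ n, b r ≤ b i)
    (hrleast : ∀ k, 1 ≤ k → k ≤ n → (∀ i ≤ n, b k ≤ b i) → r ≤ k) :
    IsFirstPassageBridge n (shiftBridge n b r) ∧
      ∀ k, 1 ≤ k → k ≤ n → IsFirstPassageBridge n (shiftBridge n b k) → k = r := by
  constructor
  · refine ⟨shift_lattice n b hb hn hr1 hrn, ?_⟩
    intro i hi1 hin
    rw [shiftBridge, ext_of_le n b hrn]
    by_cases hc : r + i ≤ n
    · rw [ext_of_le n b hc]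
      have := hrmin (r + i) hc
      intro hcon; omega
    · rw [ext_of_gt n b (by omega)]
      intro hcon
      set j := r + i - n with hj
      have hj1 : 1 ≤ j := by omega
      have hjr : j < r := by omega
      have hjn : j ≤ n := by omega
      have hbj : b j = b r := by omega
      have : r ≤ j := hrleast j hj1 hjn (fun m hm => hbj ▸ hrmin m hm)
      omega
  · intro k hk1 hkn hfpb
    obtain ⟨hlat, hne⟩ := hfpb
    -- nonnegativity of the shift before time n
    have hnonneg : ∀ i < n, 0 ≤ shiftBridge n b k i := by
      intro i
      induction i with
      | zero => intro _; simp [shiftBridge]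
      | succ m ih =>
        intro hm
        have h0 : 0 ≤ shiftBridge n b k m := ih (by omega)
        have hstep := hlat.2.2 m (by omega)
        have hne' := hne (m + 1) (by omega) hm
        omega
    -- k is a minimum point
    have hbkn : b k ≤ -1 := by
      rcases eq_or_lt_of_le hkn with h | h
      · rw [h, hb.2.1]
      · have := hnonneg (n - k) (by omega)
        rw [shiftBridge, ext_of_le n b hkn] at this
        have h1 : k + (n - k) = n := by omega
        rw [h1, ext_of_le n b le_rfl, hb.2.1] at this
        omega
    have hstrict : ∀ j, 1 ≤ j → j < k → b k < b j := by
      intro j hj1 hjk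
      have hi : n + j - k < n := by omega
      have := hnonneg (n + j - k) hi
      rw [shiftBridge, ext_of_le n b hkn, ext_of_gt n b (by omega)] at this
      have h1 : k + (n + j - k) - n = j := by omega
      rw [h1] at this
      omega
    have hkmin : ∀ i ≤ n, b k ≤ b i := by
      intro i hi
      rcases Nat.lt_or_ge i k with h | h
      · rcases Nat.eq_zero_or_pos i with h0 | h0
        · rw [h0, hb.1]; omega
        · exact le_of_lt (hstrict i h0 h)
      · rcases eq_or_lt_of_le hi with he | he
        · rw [he, hb.2.1]; exact hbkn
        · have := hnonneg (i - k) (by omega)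
          rw [shiftBridge, ext_of_le n b hkn, ext_of_le n b (by omega)] at this
          have h1 : k + (i - k) = i := by omega
          rw [h1] at this
          omega
    have hrk : r ≤ k := hrleast k hk1 hkn hkmin
    rcases eq_or_lt_of_le hrk with h | h
    · omega
    · have h1 := hstrict r hr1 h
      have h2 := hrmin k hkn
      omega
end

section
/- Fix real numbers x_1,…,x_n and 1 ≤ k ≤ n. Let S_k = Σ_{j=1}^k x_{π(j)} where π is a uniformly random permutation of {1,…,n} (sampling without replacement), and let S*_k = Σ_{j=1}^k x_{Y_j} where Y_1,…,Y_k are independent and uniformly distributed on {1,…,n} (sampling with replacement). Then for every convex continuous function φ : ℝ → ℝ, E[φ(S_k)] ≤ E[φ(S*_k)]. -/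
open Finset


lemma card_perm_eq_on {α : Type*} [Fintype α] [DecidableEq α] (s : Set α) [DecidablePred (· ∈ s)]
    [Fintype s] (u : s → α) (hu : Function.Injective u) :
    (univ.filter fun ρ : Equiv.Perm α => ∀ a : s, ρ a = u a).card
      = (Fintype.card α - Fintype.card s).factorial := by
  classical
  rw [← Fintype.card_subtype]
  have h1 : Fintype.card {ρ : Equiv.Perm α // ∀ a : s, ρ a = u a}
      = Fintype.card ((sᶜ : Set α) ≃ ((Set.range u)ᶜ : Set α)) := by
    refine Fintype.card_congr ?_
    refine (Equiv.subtypeEquivRight ?_).trans (Equiv.Set.compl (Equiv.ofInjective u hu))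
    intro ρ
    simp [Equiv.ofInjective_apply]
  rw [h1]
  have h2 : Fintype.card ((Set.range u)ᶜ : Set α) = Fintype.card ((sᶜ : Set α)) := by
    rw [Fintype.card_compl_set, Fintype.card_compl_set, Set.card_range_of_injective hu]
  rw [Fintype.card_equiv (Fintype.equivOfCardEq h2.symm), Fintype.card_compl_set]

lemma card_perm_cond {n k : ℕ} (hk1 : 1 ≤ k) (hkn : k ≤ n) (S : Finset (Fin n)) (hS : S.card ≤ k) :
    (univ.filter fun ρ : Equiv.Perm (Fin n) => ∀ s ∈ S, (ρ s).val < k).card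
      = k.descFactorial S.card * (n - S.card).factorial := by
  classical
  set s : Set (Fin n) := ↑S with hs
  have hcards : Fintype.card s = S.card := by simp [hs]
  -- the classifying map: restriction of ρ to S, valued in Fin k
  set f : Equiv.Perm (Fin n) → (s → Fin k) := fun ρ a =>
    if h : (ρ a).val < k then ⟨(ρ a).val, h⟩ else ⟨0, hk1⟩ with hf
  rw [Finset.card_eq_sum_card_fiberwise (f := f)
    (t := (univ : Finset (s → Fin k))) (fun _ _ => mem_univ _)]
  have hfib : ∀ g : s → Fin k,
      ((univ.filter fun ρ : Equiv.Perm (Fin n) => ∀ s ∈ S, (ρ s).val < k).filter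
        fun ρ => f ρ = g).card
      = if Function.Injective g then (n - S.card).factorial else 0 := by
    intro g
    have hfilter : ((univ.filter fun ρ : Equiv.Perm (Fin n) => ∀ s ∈ S, (ρ s).val < k).filter
        fun ρ => f ρ = g)
        = univ.filter fun ρ : Equiv.Perm (Fin n) => ∀ a : s, ρ a = Fin.castLE hkn (g a) := by
      ext ρ
      simp only [mem_filter, mem_univ, true_and]
      constructor
      · rintro ⟨h1, h2⟩ a
        have hlt : (ρ a).val < k := h1 a a.2
        have : f ρ a = g a := by rw [h2]
        rw [hf] at this
        simp only [dif_pos hlt] at this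
        apply Fin.ext
        simpa [Fin.castLE] using congrArg Fin.val this
      · intro h
        have h1 : ∀ t ∈ S, (ρ t).val < k := by
          intro t ht
          have := h ⟨t, ht⟩
          rw [this]
          exact (g ⟨t, ht⟩).2
        refine ⟨h1, ?_⟩
        funext a
        have hlt : (ρ a).val < k := h1 a a.2
        rw [hf]
        simp only [dif_pos hlt]
        apply Fin.ext
        simpa using congrArg Fin.val (h a)
    rw [hfilter]
    by_cases hg : Function.Injective g
    · rw [if_pos hg]
      have hu : Function.Injective (fun a : s => (Fin.castLE hkn (g a) : Fin n)) :=
        fun a b hab => hg (Fin.castLE_injective hkn hab)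
      rw [card_perm_eq_on s _ hu, hcards, Fintype.card_fin]
    · rw [if_neg hg]
      rw [Finset.card_eq_zero, Finset.filter_eq_empty_iff]
      intro ρ _ h
      apply hg
      intro a b hab
      have : ρ a = ρ b := by rw [h a, h b, hab]
      exact Subtype.ext (ρ.injective this)
  calc ∑ g : s → Fin k, ((univ.filter fun ρ : Equiv.Perm (Fin n) =>
          ∀ s ∈ S, (ρ s).val < k).filter fun ρ => f ρ = g).card
      = ∑ g : s → Fin k, if Function.Injective g then (n - S.card).factorial else 0 := by
        exact Finset.sum_congr rfl fun g _ => hfib g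
    _ = ∑ g ∈ univ.filter (fun g : s → Fin k => Function.Injective g),
          (n - S.card).factorial := (Finset.sum_filter _ _).symm
    _ = (univ.filter (fun g : s → Fin k => Function.Injective g)).card
          * (n - S.card).factorial := by rw [Finset.sum_const, smul_eq_mul]
    _ = k.descFactorial S.card * (n - S.card).factorial := by
        congr 1
        rw [← Fintype.card_subtype]
        rw [Fintype.card_congr (Equiv.subtypeInjectiveEquivEmbedding s (Fin k)),
          Fintype.card_embedding_eq, hcards, Fintype.card_fin]


noncomputable def Wgt (n k m : ℕ) : ℝ :=
  (n.descFactorial m : ℝ) / ((n : ℝ) ^ k * (k.descFactorial m))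

lemma fiber_card {n k : ℕ} (hk1 : 1 ≤ k) (hkn : k ≤ n) (y : Fin k → Fin n) :
    (univ.filter fun p : Equiv.Perm (Fin n) × (Fin k → Fin k) =>
        (fun j => p.1 (Fin.castLE hkn (p.2 j))) = y).card
      = k.descFactorial (univ.image y).card * (n - (univ.image y).card).factorial := by
  classical
  set S := univ.image y with hS
  have hSk : S.card ≤ k := by
    calc S.card ≤ (univ : Finset (Fin k)).card := Finset.card_image_le
      _ = k := by simp
  rw [← card_perm_cond hk1 hkn S hSk]
  refine Finset.card_bij' (i := fun p _ => p.1.symm)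
    (j := fun ρ hρ => (ρ.symm, fun j => ⟨(ρ (y j)).val, by
      simp only [mem_filter, mem_univ, true_and] at hρ
      exact hρ (y j) (by rw [hS]; exact Finset.mem_image_of_mem y (mem_univ j))⟩))
    ?_ ?_ ?_ ?_
  · -- membership i
    intro p hp
    simp only [mem_filter, mem_univ, true_and] at hp ⊢
    intro s hs
    rw [hS] at hs
    obtain ⟨j, _, rfl⟩ := Finset.mem_image.mp hs
    have := congrFun hp j
    have h2 : p.1.symm (y j) = Fin.castLE hkn (p.2 j) := by
      rw [← this]; simp
    rw [h2]
    exact (p.2 j).2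
  · -- membership j
    intro ρ hρ
    simp only [mem_filter, mem_univ, true_and]
    funext j
    have : (Fin.castLE hkn ⟨(ρ (y j)).val, by
        simp only [mem_filter, mem_univ, true_and] at hρ
        exact hρ (y j) (by rw [hS]; exact Finset.mem_image_of_mem y (mem_univ j))⟩ : Fin n)
        = ρ (y j) := by
      apply Fin.ext; simp [Fin.castLE]
    simp only [this]
    simp
  · -- left inverse
    intro p hp
    simp only [mem_filter, mem_univ, true_and] at hp
    ext1
    · simp
    · funext j
      apply Fin.ext
      have := congrFun hp j
      have h2 : p.1.symm (y j) = Fin.castLE hkn (p.2 j) := by rw [← this]; simp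
      simp [Equiv.symm_symm, h2, Fin.castLE]
  · -- right inverse
    intro ρ hρ
    simp

lemma key {n k : ℕ} (hk1 : 1 ≤ k) (hkn : k ≤ n) (G : (Fin k → Fin n) → ℝ) :
    ∑ π : Equiv.Perm (Fin n), ∑ c : Fin k → Fin k,
      Wgt n k (univ.image c).card * G (fun j => π (Fin.castLE hkn (c j)))
    = ((n.factorial : ℝ) / (n : ℝ) ^ k) * ∑ y : Fin k → Fin n, G y := by
  classical
  have hn1 : 1 ≤ n := hk1.trans hkn
  rw [← Fintype.sum_prod_type']
  rw [← Finset.sum_fiberwise (univ : Finset (Equiv.Perm (Fin n) × (Fin k → Fin k)))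
      (fun p => (fun j => p.1 (Fin.castLE hkn (p.2 j))))
      (fun p => Wgt n k (univ.image p.2).card * G (fun j => p.1 (Fin.castLE hkn (p.2 j))))]
  rw [Finset.mul_sum]
  refine Finset.sum_congr rfl fun y _ => ?_
  set M := (univ.image y).card with hM
  have hMk : M ≤ k := by
    calc M ≤ (univ : Finset (Fin k)).card := Finset.card_image_le
      _ = k := by simp
  have hMn : M ≤ n := hMk.trans hkn
  have hterm : ∀ p ∈ (univ : Finset (Equiv.Perm (Fin n) × (Fin k → Fin k))).filter
      (fun p => (fun j => p.1 (Fin.castLE hkn (p.2 j))) = y),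
      Wgt n k (univ.image p.2).card * G (fun j => p.1 (Fin.castLE hkn (p.2 j)))
        = Wgt n k M * G y := by
    intro p hp
    simp only [mem_filter, mem_univ, true_and] at hp
    rw [hp]
    congr 2
    have himg : (univ.image p.2).image (fun t => p.1 (Fin.castLE hkn t)) = univ.image y := by
      rw [Finset.image_image]
      exact congrArg (fun f => Finset.image f univ) hp
    have hinj : Function.Injective (fun t : Fin k => p.1 (Fin.castLE hkn t)) :=
      fun a b hab => Fin.castLE_injective hkn (p.1.injective hab)
    rw [hM, ← himg, Finset.card_image_of_injective _ hinj]
  rw [Finset.sum_congr rfl hterm, Finset.sum_const]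
  have hcard : ((univ : Finset (Equiv.Perm (Fin n) × (Fin k → Fin k))).filter
      (fun p => (fun j => p.1 (Fin.castLE hkn (p.2 j))) = y)).card
      = k.descFactorial M * (n - M).factorial := fiber_card hk1 hkn y
  rw [hcard, nsmul_eq_mul]
  have hkM : (k.descFactorial M : ℝ) ≠ 0 := by
    have : k.descFactorial M ≠ 0 := by
      intro h
      exact absurd (Nat.descFactorial_eq_zero_iff_lt.mp h) (not_lt.mpr hMk)
    exact_mod_cast this
  have hnk : ((n : ℝ)) ^ k ≠ 0 := pow_ne_zero _ (Nat.cast_ne_zero.mpr (by omega))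
  have hfact : ((n - M).factorial * n.descFactorial M : ℕ) = n.factorial :=
    Nat.factorial_mul_descFactorial hMn
  have h1 : ((n - M).factorial : ℝ) * (n.descFactorial M : ℝ) = (n.factorial : ℝ) := by
    exact_mod_cast congrArg (fun t : ℕ => (t : ℝ)) hfact
  unfold Wgt
  push_cast
  field_simp
  linear_combination (G y) * h1


lemma norm_sum {n k : ℕ} (hk1 : 1 ≤ k) (hkn : k ≤ n) :
    ∑ c : Fin k → Fin k, Wgt n k (univ.image c).card = 1 := by
  classical
  have hn1 : 1 ≤ n := hk1.trans hkn
  have h := key hk1 hkn (fun _ => (1 : ℝ))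
  simp only [mul_one] at h
  rw [Finset.sum_const, Finset.sum_const] at h
  simp only [Finset.card_univ, Fintype.card_perm, Fintype.card_fin, smul_eq_mul,
    Fintype.card_fun, nsmul_eq_mul, mul_one] at h
  have hnk : ((n : ℝ)) ^ k ≠ 0 := pow_ne_zero _ (Nat.cast_ne_zero.mpr (by omega))
  have hfac : ((n.factorial : ℝ)) ≠ 0 := Nat.cast_ne_zero.mpr n.factorial_ne_zero
  have h2 : (n.factorial : ℝ) * ∑ c : Fin k → Fin k, Wgt n k (univ.image c).card
      = (n.factorial : ℝ) := by
    rw [h]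
    push_cast
    field_simp
  exact mul_left_cancel₀ hfac (by rw [h2, mul_one])

lemma cnt_sum {n k : ℕ} (hk1 : 1 ≤ k) (hkn : k ≤ n) (i : Fin k) :
    ∑ c : Fin k → Fin k, Wgt n k (univ.image c).card
        * ((univ.filter fun j => c j = i).card : ℝ) = 1 := by
  classical
  set T : Fin k → ℝ := fun i' => ∑ c : Fin k → Fin k, Wgt n k (univ.image c).card
        * ((univ.filter fun j => c j = i').card : ℝ) with hT
  have hsym : ∀ i' : Fin k, T i' = T i := by
    intro i'
    rw [hT]
    refine Fintype.sum_equiv (Equiv.arrowCongr (Equiv.refl (Fin k)) (Equiv.swap i' i)) _ _ ?_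
    intro c
    have h1 : ((Equiv.refl (Fin k)).arrowCongr (Equiv.swap i' i)) c
        = fun j => Equiv.swap i' i (c j) := by
      funext j; simp
    rw [h1]
    have h2 : univ.image (fun j => Equiv.swap i' i (c j))
        = (univ.image c).image (Equiv.swap i' i) := by
      rw [Finset.image_image]; rfl
    have h3 : (univ.image (fun j => Equiv.swap i' i (c j))).card = (univ.image c).card := by
      rw [h2, Finset.card_image_of_injective _ (Equiv.injective _)]
    have h4 : (univ.filter fun j => Equiv.swap i' i (c j) = i)
        = (univ.filter fun j => c j = i') := by
      refine Finset.filter_congr fun j _ => ?_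
      rw [Equiv.apply_eq_iff_eq_symm_apply, Equiv.symm_swap, Equiv.swap_apply_right]
    rw [h3, h4]
  have hsum : ∑ i' : Fin k, T i' = k := by
    rw [hT]
    rw [Finset.sum_comm]
    have hc : ∀ c : Fin k → Fin k, ∑ i' : Fin k, Wgt n k (univ.image c).card
        * ((univ.filter fun j => c j = i').card : ℝ)
        = Wgt n k (univ.image c).card * k := by
      intro c
      rw [← Finset.mul_sum]
      congr 1
      have : ∑ i' : Fin k, (((univ.filter fun j => c j = i').card : ℕ) : ℝ)
          = ((∑ i' : Fin k, (univ.filter fun j => c j = i').card : ℕ) : ℝ) := by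
        push_cast; rfl
      rw [this, Finset.sum_card_fiberwise_eq_card_filter]
      simp
    rw [Finset.sum_congr rfl fun c _ => hc c, ← Finset.sum_mul, norm_sum hk1 hkn, one_mul]
  have hsum2 : ∑ i' : Fin k, T i' = k * T i := by
    rw [Finset.sum_congr rfl fun i' _ => hsym i', Finset.sum_const]
    simp [nsmul_eq_mul]
  have hk0 : (k : ℝ) ≠ 0 := Nat.cast_ne_zero.mpr (by omega)
  have : (k : ℝ) * T i = (k : ℝ) * 1 := by rw [mul_one, ← hsum2, hsum]
  exact mul_left_cancel₀ hk0 this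

lemma mean_sum {n k : ℕ} (hk1 : 1 ≤ k) (hkn : k ≤ n) (v : Fin k → ℝ) :
    ∑ c : Fin k → Fin k, Wgt n k (univ.image c).card * (∑ j : Fin k, v (c j))
      = ∑ j : Fin k, v j := by
  classical
  have hin : ∀ c : Fin k → Fin k, ∑ j : Fin k, v (c j)
      = ∑ i : Fin k, ((univ.filter fun j => c j = i).card : ℝ) * v i := by
    intro c
    rw [← Finset.sum_fiberwise' univ c v]
    refine Finset.sum_congr rfl fun i _ => ?_
    rw [Finset.sum_const, nsmul_eq_mul]
  calc ∑ c : Fin k → Fin k, Wgt n k (univ.image c).card * (∑ j : Fin k, v (c j))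
      = ∑ c : Fin k → Fin k, ∑ i : Fin k, Wgt n k (univ.image c).card
          * (((univ.filter fun j => c j = i).card : ℝ) * v i) := by
        refine Finset.sum_congr rfl fun c _ => ?_
        rw [hin c, Finset.mul_sum]
    _ = ∑ i : Fin k, (∑ c : Fin k → Fin k, Wgt n k (univ.image c).card
          * ((univ.filter fun j => c j = i).card : ℝ)) * v i := by
        rw [Finset.sum_comm]
        refine Finset.sum_congr rfl fun i _ => ?_
        rw [Finset.sum_mul]
        exact Finset.sum_congr rfl fun c _ => by ring
    _ = ∑ j : Fin k, v j := by
        refine Finset.sum_congr rfl fun i _ => ?_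
        rw [cnt_sum hk1 hkn i, one_mul]

/-- Dilation (Aldous): if `S_k` is the sum of `k` draws without replacement from the
finite population `x 0, …, x (n-1)` (modeled by a uniformly random permutation) and
`S*_k` is the sum of `k` draws with replacement (modeled by i.i.d. uniform indices),
then `E[φ(S_k)] ≤ E[φ(S*_k)]` for every convex continuous `φ : ℝ → ℝ`. -/
theorem stmt3 (n k : ℕ) (hk1 : 1 ≤ k) (hkn : k ≤ n) (x : Fin n → ℝ)
    (φ : ℝ → ℝ) (hφ_convex : ConvexOn ℝ Set.univ φ) (hφ_cont : Continuous φ) :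
    (∑ π : Equiv.Perm (Fin n), φ (∑ j : Fin k, x (π (Fin.castLE hkn j)))) /
        (Nat.factorial n : ℝ)
      ≤ (∑ y : Fin k → Fin n, φ (∑ j : Fin k, x (y j))) / ((n : ℝ) ^ k) := by
  classical
  have hn1 : 1 ≤ n := hk1.trans hkn
  have hW0 : ∀ c : Fin k → Fin k, 0 ≤ Wgt n k (univ.image c).card := by
    intro c
    unfold Wgt
    positivity
  have jensen : ∀ π : Equiv.Perm (Fin n),
      φ (∑ j : Fin k, x (π (Fin.castLE hkn j)))
        ≤ ∑ c : Fin k → Fin k, Wgt n k (univ.image c).card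
            * φ (∑ j : Fin k, x (π (Fin.castLE hkn (c j)))) := by
    intro π
    have hmean := mean_sum hk1 hkn (fun j => x (π (Fin.castLE hkn j)))
    have hjen := hφ_convex.map_sum_le (t := (univ : Finset (Fin k → Fin k)))
      (w := fun c : Fin k → Fin k => Wgt n k (univ.image c).card)
      (p := fun c : Fin k → Fin k => ∑ j : Fin k, x (π (Fin.castLE hkn (c j))))
      (fun c _ => hW0 c) (norm_sum hk1 hkn) (fun c _ => Set.mem_univ _)
    simp only [smul_eq_mul] at hjen
    rw [hmean] at hjen
    exact hjen
  have hkey := key hk1 hkn (fun y => φ (∑ j : Fin k, x (y j)))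
  have hle : ∑ π : Equiv.Perm (Fin n), φ (∑ j : Fin k, x (π (Fin.castLE hkn j)))
      ≤ ((n.factorial : ℝ) / (n : ℝ) ^ k) * ∑ y : Fin k → Fin n, φ (∑ j : Fin k, x (y j)) := by
    calc ∑ π : Equiv.Perm (Fin n), φ (∑ j : Fin k, x (π (Fin.castLE hkn j)))
        ≤ ∑ π : Equiv.Perm (Fin n), ∑ c : Fin k → Fin k, Wgt n k (univ.image c).card
            * φ (∑ j : Fin k, x (π (Fin.castLE hkn (c j)))) :=
          Finset.sum_le_sum fun π _ => jensen π
      _ = ((n.factorial : ℝ) / (n : ℝ) ^ k) * ∑ y : Fin k → Fin n, φ (∑ j : Fin k, x (y j)) :=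
          hkey
  have hfac : (0 : ℝ) < (n.factorial : ℝ) := Nat.cast_pos.mpr n.factorial_pos
  have hnk : (0 : ℝ) < (n : ℝ) ^ k := pow_pos (Nat.cast_pos.mpr (by omega)) k
  have hrw : (∑ y : Fin k → Fin n, φ (∑ j : Fin k, x (y j))) / ((n : ℝ) ^ k)
      = (((n.factorial : ℝ) / (n : ℝ) ^ k) * ∑ y : Fin k → Fin n, φ (∑ j : Fin k, x (y j)))
          / (n.factorial : ℝ) := by
    field_simp
  rw [hrw]
  exact (div_le_div_iff_of_pos_right hfac).mpr hle
end

section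
/- Let (Ω, F, P) be a probability space with filtration (F_j)_{0≤j≤n}, and let (X_j)_{0≤j≤n} be a bounded martingale adapted to (F_j) with X_0 = 0. Let b > 0 and v > 0 be such that almost surely X_{j+1} − X_j ≤ b for every 0 ≤ j ≤ n−1, and almost surely Σ_{j=0}^{n−1} E[(X_{j+1} − X_j)² | F_j] ≤ v. Then for every t ≥ 0, P(max_{0≤j≤n} X_j ≥ t) ≤ exp(−t² / (2v(1 + bt/(3v)))). -/
open MeasureTheory Filter Nat intervalIntegral

lemma exp_sub_one_sub_eq (x : ℝ) :
    Real.exp x - 1 - x = x ^ 2 * ∫ s in (0:ℝ)..1, (1 - s) * Real.exp (s * x) := by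
  rcases eq_or_ne x 0 with rfl | hx
  · simp
  · have h : ∀ s ∈ Set.uIcc (0:ℝ) 1, HasDerivAt
        (fun s => (1 - s) / x * Real.exp (s * x) + 1 / x ^ 2 * Real.exp (s * x))
        ((1 - s) * Real.exp (s * x)) s := by
      intro s _
      have h1 : HasDerivAt (fun s : ℝ => Real.exp (s * x)) (x * Real.exp (s * x)) s := by
        simpa [mul_comm, Function.comp_def] using (Real.hasDerivAt_exp (s * x)).comp s
          ((hasDerivAt_id s).mul_const x)
      have h2 : HasDerivAt (fun s : ℝ => (1 - s) / x) (-1 / x) s := by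
        simpa using (((hasDerivAt_id s).const_sub 1).div_const x)
      have := (h2.mul h1).add ((hasDerivAt_const s (1 / x ^ 2)).mul h1)
      refine this.congr_deriv ?_
      field_simp
      ring
    rw [intervalIntegral.integral_eq_sub_of_hasDerivAt h
      (Continuous.intervalIntegrable (by continuity) 0 1)]
    field_simp
    simp only [sub_self, sub_zero, mul_zero, Real.exp_zero]
    ring

lemma repr_mono {x y : ℝ} (hxy : x ≤ y) :
    (∫ s in (0:ℝ)..1, (1 - s) * Real.exp (s * x))
      ≤ ∫ s in (0:ℝ)..1, (1 - s) * Real.exp (s * y) := by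
  refine intervalIntegral.integral_mono_on zero_le_one
    (Continuous.intervalIntegrable (by continuity) 0 1)
    (Continuous.intervalIntegrable (by continuity) 0 1) ?_
  intro s hs
  have h1 : 0 ≤ 1 - s := by linarith [hs.2]
  exact mul_le_mul_of_nonneg_left
    (Real.exp_le_exp.2 (mul_le_mul_of_nonneg_left hxy hs.1)) h1

/-- Key pointwise inequality: for `d ≤ b`,
`exp (h*d) ≤ 1 + h*d + ((exp (h*b) - 1 - h*b)/b^2) * d^2`. -/

lemma key_pointwise {h b : ℝ} (hh : 0 ≤ h) (hb : 0 < b) {d : ℝ} (hd : d ≤ b) :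
    Real.exp (h * d) ≤ 1 + h * d + (Real.exp (h * b) - 1 - h * b) / b ^ 2 * d ^ 2 := by
  rcases eq_or_lt_of_le hh with rfl | hh
  · simp
  have hxy : h * d ≤ h * b := mul_le_mul_of_nonneg_left hd hh.le
  have e1 := exp_sub_one_sub_eq (h * d)
  have e2 := exp_sub_one_sub_eq (h * b)
  have hmono := repr_mono hxy
  have key : Real.exp (h * d) - 1 - h * d
      ≤ (h * d) ^ 2 * ((Real.exp (h * b) - 1 - h * b) / (h * b) ^ 2) := by
    rw [e1]
    have h2 : (Real.exp (h * b) - 1 - h * b) / (h * b) ^ 2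
        = ∫ s in (0:ℝ)..1, (1 - s) * Real.exp (s * (h * b)) := by
      rw [e2]; field_simp
    rw [h2]
    exact mul_le_mul_of_nonneg_left hmono (sq_nonneg _)
  have heq : (h * d) ^ 2 * ((Real.exp (h * b) - 1 - h * b) / (h * b) ^ 2)
      = (Real.exp (h * b) - 1 - h * b) / b ^ 2 * d ^ 2 := by
    field_simp
  linarith [key, heq.symm ▸ key]

lemma factorial_ge : ∀ k : ℕ, 2 * 3 ^ k ≤ (k + 2)! := by
  intro k
  induction k with
  | zero => simp [Nat.factorial]
  | succ k ih =>
      have h3 : (3:ℕ) ≤ k + 3 := by omega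
      calc 2 * 3 ^ (k + 1) = 3 * (2 * 3 ^ k) := by ring
        _ ≤ 3 * (k + 2)! := by omega
        _ ≤ (k + 3) * (k + 2)! := Nat.mul_le_mul_right _ h3
        _ = (k + 3)! := rfl

lemma exp_taylor_tail (x : ℝ) :
    Real.exp x - 1 - x = ∑' k : ℕ, x ^ (k + 2) / ((k + 2)! : ℝ) := by
  have hsum : Real.exp x = ∑' n : ℕ, x ^ n / (n ! : ℝ) := by
    rw [Real.exp_eq_exp_ℝ, NormedSpace.exp_eq_tsum_div]
  have hS := Real.summable_pow_div_factorial x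
  have h2 := Summable.sum_add_tsum_nat_add 2 hS
  rw [hsum, ← h2]
  simp [Finset.sum_range_succ, Nat.factorial]
  ring

lemma series_bound {x : ℝ} (hx0 : 0 ≤ x) (hx3 : x < 3) :
    Real.exp x - 1 - x ≤ x ^ 2 / (2 * (1 - x / 3)) := by
  rw [exp_taylor_tail]
  have hr0 : 0 ≤ x / 3 := by linarith
  have hr1 : x / 3 < 1 := by linarith
  have hgeo : Summable fun k : ℕ => (x / 3) ^ k := summable_geometric_of_lt_one hr0 hr1
  have hterm : ∀ k : ℕ, x ^ (k + 2) / ((k + 2)! : ℝ) ≤ x ^ 2 / 2 * (x / 3) ^ k := by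
    intro k
    have h1 : x ^ (k + 2) / ((k + 2)! : ℝ) = x ^ (k+2) * (((k + 2)! : ℝ))⁻¹ := by ring
    have h2 : x ^ 2 / 2 * (x / 3) ^ k = x ^ (k+2) * (2 * 3 ^ k : ℝ)⁻¹ := by
      rw [div_pow]
      ring
    rw [h1, h2]
    apply mul_le_mul_of_nonneg_left _ (pow_nonneg hx0 _)
    apply inv_anti₀ (by positivity)
    exact_mod_cast factorial_ge k
  have hS1 : Summable fun k : ℕ => x ^ (k + 2) / ((k + 2)! : ℝ) :=
    (Real.summable_pow_div_factorial x).comp_injective (add_left_injective 2)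
  calc (∑' k : ℕ, x ^ (k + 2) / ((k + 2)! : ℝ))
      ≤ ∑' k : ℕ, x ^ 2 / 2 * (x / 3) ^ k := Summable.tsum_le_tsum hterm hS1 (hgeo.mul_left _)
    _ = x ^ 2 / 2 * (1 - x / 3)⁻¹ := by
        rw [tsum_mul_left, tsum_geometric_of_lt_one hr0 hr1]
    _ = x ^ 2 / (2 * (1 - x / 3)) := by
        field_simp

/-- McDiarmid's martingale concentration inequality (Theorem 3.15 in McDiarmid 1998):
for a bounded martingale `(X_j)_{0 ≤ j ≤ n}` with `X_0 = 0`, increments bounded above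
by `b`, and sum of conditional variances bounded by `v`,
`P(max_{0 ≤ j ≤ n} X_j ≥ t) ≤ exp(-t² / (2v(1 + bt/(3v))))` for every `t ≥ 0`. -/
theorem stmt4 {Ω : Type*} {m0 : MeasurableSpace Ω} (μ : Measure Ω)
    [IsProbabilityMeasure μ] (ℱ : Filtration ℕ m0) (n : ℕ) (X : ℕ → Ω → ℝ)
    (hadapted : Adapted ℱ X)
    (hint : ∀ j, Integrable (X j) μ)
    (hmart : ∀ j < n, μ[X (j + 1) | ℱ j] =ᵐ[μ] X j)
    (hX0 : ∀ᵐ ω ∂μ, X 0 ω = 0)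
    (hbdd : ∃ C : ℝ, ∀ j ≤ n, ∀ᵐ ω ∂μ, |X j ω| ≤ C)
    (b v : ℝ) (hb : 0 < b) (hv : 0 < v)
    (hstep : ∀ j < n, ∀ᵐ ω ∂μ, X (j + 1) ω - X j ω ≤ b)
    (hvar : ∀ᵐ ω ∂μ,
      ∑ j ∈ Finset.range n, (μ[fun ω' => (X (j + 1) ω' - X j ω') ^ 2 | ℱ j]) ω ≤ v)
    (t : ℝ) (ht : 0 ≤ t) :
    (μ {ω | t ≤ (Finset.range (n + 1)).sup' Finset.nonempty_range_add_one
        (fun j => X j ω)}).toReal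
      ≤ Real.exp (-t ^ 2 / (2 * v * (1 + b * t / (3 * v)))) := by
  -- trivial case t = 0
  rcases eq_or_lt_of_le ht with rfl | ht
  · have : (-(0:ℝ) ^ 2 / (2 * v * (1 + b * 0 / (3 * v)))) = 0 := by simp
    rw [this, Real.exp_zero]
    exact ENNReal.toReal_le_of_le_ofReal zero_le_one (by simpa using prob_le_one)
  obtain ⟨C, hC⟩ := hbdd
  -- parameters
  set h : ℝ := t / (v + b * t / 3) with hh_def
  have hvbt : 0 < v + b * t / 3 := by positivity
  have hh : 0 < h := div_pos ht hvbt
  set g : ℝ := (Real.exp (h * b) - 1 - h * b) / b ^ 2 with hg_def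
  have hg0 : 0 ≤ g := by
    apply div_nonneg _ (sq_nonneg b)
    nlinarith [Real.add_one_le_exp (h * b)]
  -- clamped process
  set Xc : ℕ → Ω → ℝ := fun j => X (min j n) with hXc_def
  have hXcadp : StronglyAdapted ℱ Xc := fun j => (hadapted (min j n)).stronglyMeasurable.mono (ℱ.mono (min_le_left _ _))
  have hXcint : ∀ j, Integrable (Xc j) μ := fun j => hint _
  have hXcbd : ∀ j, ∀ᵐ ω ∂μ, |Xc j ω| ≤ C := fun j => hC _ (min_le_right _ _)
  have hXcmart : ∀ j, μ[Xc (j + 1) | ℱ j] =ᵐ[μ] Xc j := by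
    intro j
    rcases lt_or_ge j n with hj | hj
    · have h1 : min (j + 1) n = j + 1 := min_eq_left hj
      have h2 : min j n = j := min_eq_left hj.le
      simp only [hXc_def, h1, h2]
      exact hmart j hj
    · have h1 : min (j + 1) n = n := min_eq_right (by omega)
      have h2 : min j n = n := min_eq_right hj
      simp only [hXc_def, h1, h2]
      rw [condExp_of_stronglyMeasurable (ℱ.le j)
        ((hadapted n).stronglyMeasurable.mono (ℱ.mono hj)) (hint n)]
  set W : ℕ → Ω → ℝ := fun j => μ[fun ω => (Xc (j + 1) ω - Xc j ω) ^ 2 | ℱ j] with hW_def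
  have hW_meas : ∀ j, StronglyMeasurable[ℱ j] (W j) := fun j => stronglyMeasurable_condExp
  have hD_int : ∀ j, Integrable (fun ω => Xc (j + 1) ω - Xc j ω) μ :=
    fun j => (hXcint (j + 1)).sub (hXcint j)
  have hDsq_int : ∀ j, Integrable (fun ω => (Xc (j + 1) ω - Xc j ω) ^ 2) μ := by
    intro j
    refine Integrable.mono' (integrable_const ((2 * C) ^ 2)) ?_ ?_
    · exact ((((hXcadp (j+1)).mono (ℱ.le _)).sub ((hXcadp j).mono (ℱ.le _))).pow 2).aestronglyMeasurable
    · filter_upwards [hXcbd (j + 1), hXcbd j] with ω h1 h2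
      have : |Xc (j+1) ω - Xc j ω| ≤ 2 * C := by
        calc |Xc (j+1) ω - Xc j ω| ≤ |Xc (j+1) ω| + |Xc j ω| := abs_sub _ _
          _ ≤ 2 * C := by linarith
      rw [Real.norm_eq_abs, abs_of_nonneg (sq_nonneg _)]
      calc (Xc (j+1) ω - Xc j ω) ^ 2 = |Xc (j+1) ω - Xc j ω| ^ 2 := (sq_abs _).symm
        _ ≤ (2 * C) ^ 2 := by nlinarith [abs_nonneg (Xc (j+1) ω - Xc j ω)]
  have hW_nonneg : ∀ j, 0 ≤ᵐ[μ] W j := fun j =>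
    condExp_nonneg (Filter.Eventually.of_forall fun ω => sq_nonneg _)
  set V : ℕ → Ω → ℝ := fun j ω => ∑ i ∈ Finset.range j, W i ω with hV_def
  have hV_meas : ∀ j, StronglyMeasurable[ℱ j] (V j) := by
    intro j
    apply Finset.stronglyMeasurable_fun_sum
    intro i hi
    exact (hW_meas i).mono (ℱ.mono (Finset.mem_range.mp hi).le)
  have hVW_nonneg : ∀ᵐ ω ∂μ, ∀ i, 0 ≤ W i ω := by
    rw [ae_all_iff]; exact hW_nonneg
  -- the exponential supermartingale
  set Y : ℕ → Ω → ℝ := fun j ω => Real.exp (h * Xc j ω - g * V j ω) with hY_def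
  have hYpos : ∀ j ω, 0 < Y j ω := fun j ω => Real.exp_pos _
  have hYadp : StronglyAdapted ℱ Y := by
    intro j
    exact (Real.continuous_exp.comp_stronglyMeasurable
      (((hXcadp j).const_mul h).sub ((hV_meas j).const_mul g)))
  have hYbd : ∀ j, ∀ᵐ ω ∂μ, |Y j ω| ≤ Real.exp (h * C) := by
    intro j
    filter_upwards [hXcbd j, hVW_nonneg] with ω h1 h2
    rw [abs_of_pos (hYpos j ω)]
    apply Real.exp_le_exp.2
    have hVnn : 0 ≤ V j ω := Finset.sum_nonneg fun i _ => h2 i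
    have : Xc j ω ≤ C := (abs_le.mp h1).2
    nlinarith
  have hYint : ∀ j, Integrable (Y j) μ := by
    intro j
    exact Integrable.mono' (integrable_const (Real.exp (h * C)))
      ((hYadp j).mono (ℱ.le j)).aestronglyMeasurable (hYbd j)
  -- supermartingale step
  have hstep' : ∀ j, μ[Y (j + 1) | ℱ j] ≤ᵐ[μ] Y j := by
    intro j
    set D : Ω → ℝ := fun ω => Xc (j + 1) ω - Xc j ω with hD_def
    have hDb : ∀ᵐ ω ∂μ, D ω ≤ b := by
      rcases lt_or_ge j n with hj | hj
      · have h1 : min (j + 1) n = j + 1 := min_eq_left hj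
        have h2 : min j n = j := min_eq_left hj.le
        simp only [hD_def, hXc_def, h1, h2]
        exact hstep j hj
      · have h1 : min (j + 1) n = n := min_eq_right (by omega)
        have h2 : min j n = n := min_eq_right hj
        apply Filter.Eventually.of_forall
        intro ω
        simp only [hD_def, hXc_def, h1, h2, sub_self]
        exact hb.le
    have hcondD : μ[D | ℱ j] =ᵐ[μ] 0 := by
      have hsub : μ[D | ℱ j] =ᵐ[μ] μ[Xc (j + 1) | ℱ j] - μ[Xc j | ℱ j] :=
        condExp_sub (m := ℱ j) (hXcint (j + 1)) (hXcint j)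
      have h2 : μ[Xc j | ℱ j] = Xc j :=
        condExp_of_stronglyMeasurable (ℱ.le j) (hXcadp j) (hXcint j)
      filter_upwards [hsub, hXcmart j] with ω hω h1
      rw [hω, Pi.sub_apply, h1, h2, Pi.zero_apply, sub_self]
    have hexpD_int : Integrable (fun ω => Real.exp (h * D ω)) μ := by
      refine Integrable.mono' (integrable_const (Real.exp (h * (2 * C)))) ?_ ?_
      · exact (Real.continuous_exp.comp_stronglyMeasurable
          ((((hXcadp (j+1)).mono (ℱ.le _)).sub ((hXcadp j).mono (ℱ.le _))).const_mul h)).aestronglyMeasurable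
      · filter_upwards [hXcbd (j + 1), hXcbd j] with ω h1 h2
        rw [Real.norm_eq_abs, abs_of_pos (Real.exp_pos _)]
        apply Real.exp_le_exp.2
        apply mul_le_mul_of_nonneg_left _ hh.le
        simp only [hD_def]
        calc Xc (j+1) ω - Xc j ω ≤ |Xc (j+1) ω| + |Xc j ω| := by
              have := abs_sub (Xc (j+1) ω) (Xc j ω)
              have := le_abs_self (Xc (j+1) ω - Xc j ω)
              linarith
          _ ≤ 2 * C := by linarith
    -- A = Y j * exp (-g * W j)
    set A : Ω → ℝ := fun ω => Real.exp (h * Xc j ω - g * V j ω - g * W j ω) with hA_def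
    have hA_meas : StronglyMeasurable[ℱ j] A :=
      Real.continuous_exp.comp_stronglyMeasurable
        ((((hXcadp j).const_mul h).sub ((hV_meas j).const_mul g)).sub ((hW_meas j).const_mul g))
    have hYsplit : Y (j + 1) = A * fun ω => Real.exp (h * D ω) := by
      funext ω
      simp only [hY_def, hA_def, hD_def, Pi.mul_apply, hV_def, Finset.sum_range_succ]
      rw [← Real.exp_add]
      ring_nf
    have hY1int : Integrable (A * fun ω => Real.exp (h * D ω)) μ := by
      rw [← hYsplit]; exact hYint (j + 1)
    have hpull : μ[A * fun ω => Real.exp (h * D ω) | ℱ j]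
        =ᵐ[μ] A * μ[fun ω => Real.exp (h * D ω) | ℱ j] :=
      condExp_mul_of_stronglyMeasurable_left hA_meas hY1int hexpD_int
    -- conditional bound on exp (h D)
    have hquad_int : Integrable (fun ω => 1 + h * D ω + g * D ω ^ 2) μ := by
      apply Integrable.add
      · exact (integrable_const 1).add ((hD_int j).const_mul h)
      · exact (hDsq_int j).const_mul g
    have hcexp_le : μ[fun ω => Real.exp (h * D ω) | ℱ j]
        ≤ᵐ[μ] fun ω => 1 + g * W j ω := by
      have hptwise : (fun ω => Real.exp (h * D ω)) ≤ᵐ[μ] fun ω => 1 + h * D ω + g * D ω ^ 2 := by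
        filter_upwards [hDb] with ω hω
        exact key_pointwise hh.le hb hω
      have hmono := condExp_mono (m := ℱ j) hexpD_int hquad_int hptwise
      have hsplit : μ[fun ω => 1 + h * D ω + g * D ω ^ 2 | ℱ j]
          =ᵐ[μ] fun ω => 1 + g * W j ω := by
        have hfeq : (fun ω => 1 + h * D ω + g * D ω ^ 2)
            = (((fun _ : Ω => (1:ℝ)) + fun ω => h * D ω) + fun ω => g * D ω ^ 2) := rfl
        rw [hfeq]
        have e1 : μ[((fun _ : Ω => (1:ℝ)) + fun ω => h * D ω) + (fun ω => g * D ω ^ 2) | ℱ j]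
            =ᵐ[μ] μ[(fun _ : Ω => (1:ℝ)) + fun ω => h * D ω | ℱ j]
              + μ[fun ω => g * D ω ^ 2 | ℱ j] :=
          condExp_add ((integrable_const (1:ℝ)).add ((hD_int j).const_mul h))
            ((hDsq_int j).const_mul g) (m := ℱ j)
        have e2 : μ[(fun _ : Ω => (1:ℝ)) + fun ω => h * D ω | ℱ j]
            =ᵐ[μ] μ[fun _ : Ω => (1:ℝ) | ℱ j] + μ[fun ω => h * D ω | ℱ j] :=
          condExp_add (integrable_const (1:ℝ)) ((hD_int j).const_mul h) (m := ℱ j)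
        have e3 : μ[fun ω => h * D ω | ℱ j] =ᵐ[μ] fun ω => h * (μ[D | ℱ j]) ω := by
          simpa [Pi.smul_def] using condExp_smul (m := ℱ j) (μ := μ) h D
        have e4 : μ[fun ω => g * D ω ^ 2 | ℱ j] =ᵐ[μ] fun ω => g * W j ω := by
          have h4 : μ[fun ω => g * D ω ^ 2 | ℱ j] =ᵐ[μ] fun ω => g * (μ[fun ω => D ω ^ 2 | ℱ j]) ω := by
            simpa [Pi.smul_def] using condExp_smul (m := ℱ j) (μ := μ) g (fun ω => D ω ^ 2)
          exact h4
        have e5 : μ[fun _ : Ω => (1:ℝ) | ℱ j] = fun _ => (1:ℝ) := by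
          simpa using condExp_const (ℱ.le j) (1:ℝ) (μ := μ)
        filter_upwards [e1, e2, e3, e4, hcondD] with ω h1 h2 h3 h4 h5
        rw [h1, Pi.add_apply, h2, Pi.add_apply, e5, h3, h4, h5]
        simp
      calc μ[fun ω => Real.exp (h * D ω) | ℱ j]
          ≤ᵐ[μ] μ[fun ω => 1 + h * D ω + g * D ω ^ 2 | ℱ j] := hmono
        _ =ᵐ[μ] fun ω => 1 + g * W j ω := hsplit
    -- combine
    rw [hYsplit]
    calc μ[A * fun ω => Real.exp (h * D ω) | ℱ j]
        =ᵐ[μ] A * μ[fun ω => Real.exp (h * D ω) | ℱ j] := hpull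
      _ ≤ᵐ[μ] Y j := by
          filter_upwards [hcexp_le, hVW_nonneg] with ω h1 h2
          simp only [Pi.mul_apply]
          have hA_pos : 0 < A ω := Real.exp_pos _
          calc A ω * (μ[fun ω => Real.exp (h * D ω) | ℱ j]) ω
              ≤ A ω * (1 + g * W j ω) := mul_le_mul_of_nonneg_left h1 hA_pos.le
            _ ≤ A ω * Real.exp (g * W j ω) := by
                apply mul_le_mul_of_nonneg_left _ hA_pos.le
                have := Real.add_one_le_exp (g * W j ω)
                linarith
            _ = Y j ω := by
                simp only [hA_def, hY_def, ← Real.exp_add]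
                ring_nf
  have hYsuper : Supermartingale Y ℱ μ := supermartingale_nat hYadp hYint hstep'
  -- optional stopping with the hitting time
  set ε : ℝ := Real.exp (h * t - g * v) with hε_def
  have hε_pos : 0 < ε := Real.exp_pos _
  set τ : Ω → WithTop ℕ := fun ω => ((hittingBtwn Y {y : ℝ | ε ≤ y} 0 n ω : ℕ) : WithTop ℕ) with hτ_def
  have hτ_stop : IsStoppingTime ℱ τ :=
    hYadp.adapted.isStoppingTime_hittingBtwn measurableSet_Ici
  have hτ_le : ∀ ω, τ ω ≤ n := fun ω => WithTop.coe_le_coe.mpr (hittingBtwn_le ω)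
  have hSV_int : Integrable (stoppedValue Y τ) μ :=
    integrable_stoppedValue ℕ hτ_stop hYint hτ_le
  have hSV_nonneg : ∀ ω, 0 ≤ stoppedValue Y τ ω := fun ω => (hYpos _ ω).le
  -- optional stopping: E[Y_τ] ≤ E[Y_0]
  have hOS : ∫ ω, stoppedValue Y τ ω ∂μ ≤ ∫ ω, Y 0 ω ∂μ := by
    have hsub : Submartingale (-Y) ℱ μ := hYsuper.neg
    have h0stop : IsStoppingTime ℱ (fun _ : Ω => ((0:ℕ) : WithTop ℕ)) := isStoppingTime_const ℱ 0
    have := hsub.expected_stoppedValue_mono h0stop hτ_stop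
      (fun ω => WithTop.coe_le_coe.mpr (Nat.zero_le _)) hτ_le
    have e1 : stoppedValue (-Y) (fun _ : Ω => ((0:ℕ) : WithTop ℕ)) = -stoppedValue Y (fun _ => ((0:ℕ) : WithTop ℕ)) := rfl
    have e2 : stoppedValue (-Y) τ = -stoppedValue Y τ := rfl
    rw [e1, e2, integral_neg', integral_neg', neg_le_neg_iff] at this
    have e3 : stoppedValue Y (fun _ : Ω => ((0:ℕ) : WithTop ℕ)) = Y 0 := stoppedValue_const Y 0
    rwa [e3] at this
  -- E[Y 0] = 1
  have hY0 : ∫ ω, Y 0 ω ∂μ = 1 := by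
    have : Y 0 =ᵐ[μ] fun _ => (1:ℝ) := by
      filter_upwards [hX0] with ω h0
      simp only [hY_def, hV_def, hXc_def]
      simp [h0]
    rw [integral_congr_ae this]
    simp
  -- the maximal event for Y
  set E' : Set Ω := {ω | ε ≤ (Finset.range (n + 1)).sup' Finset.nonempty_range_add_one
      fun k => Y k ω} with hE'_def
  have hY_meas : ∀ k, Measurable (Y k) := fun k =>
    ((hYadp k).mono (ℱ.le k)).measurable
  have hE'_meas : MeasurableSet E' :=
    measurableSet_le measurable_const
      (Finset.measurable_range_sup'' fun k _ => hY_meas k)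
  have hSV_ge : ∀ ω ∈ E', ε ≤ stoppedValue Y τ ω := by
    intro ω hω
    simp only [hE'_def, Set.mem_setOf_eq, Finset.le_sup'_iff, Finset.mem_range,
      Nat.lt_succ_iff] at hω
    refine stoppedValue_hittingBtwn_mem ?_
    obtain ⟨k, hk, hk'⟩ := hω
    exact ⟨k, by simpa using hk, hk'⟩
  have h1 : ε * (μ E').toReal ≤ ∫ ω in E', stoppedValue Y τ ω ∂μ := by
    have := setIntegral_ge_of_const_le hE'_meas (measure_ne_top μ E') hSV_ge
      hSV_int.integrableOn
    rw [smul_eq_mul, mul_comm] at this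
    exact this
  have h2 : ∫ ω in E', stoppedValue Y τ ω ∂μ ≤ ∫ ω, stoppedValue Y τ ω ∂μ :=
    setIntegral_le_integral hSV_int (Filter.Eventually.of_forall hSV_nonneg)
  have hE'_bound : (μ E').toReal ≤ 1 / ε := by
    rw [le_div_iff₀ hε_pos]
    calc (μ E').toReal * ε = ε * (μ E').toReal := mul_comm _ _
      _ ≤ ∫ ω in E', stoppedValue Y τ ω ∂μ := h1
      _ ≤ ∫ ω, stoppedValue Y τ ω ∂μ := h2
      _ ≤ ∫ ω, Y 0 ω ∂μ := hOS
      _ = 1 := hY0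
  -- the event of interest is a.e. contained in E'
  set E : Set Ω := {ω | t ≤ (Finset.range (n + 1)).sup' Finset.nonempty_range_add_one
      fun j => X j ω} with hE_def
  have hVn_le : ∀ᵐ ω ∂μ, V n ω ≤ v := by
    filter_upwards [hvar] with ω hω
    have : V n ω = ∑ j ∈ Finset.range n,
        (μ[fun ω' => (X (j + 1) ω' - X j ω') ^ 2 | ℱ j]) ω := by
      apply Finset.sum_congr rfl
      intro j hj
      have hj' : j < n := Finset.mem_range.mp hj
      have m1 : min (j + 1) n = j + 1 := min_eq_left hj'
      have m2 : min j n = j := min_eq_left hj'.le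
      simp only [hW_def, hXc_def, m1, m2]
    rw [this]
    exact hω
  have hEE' : ∀ᵐ ω ∂μ, ω ∈ E → ω ∈ E' := by
    filter_upwards [hVn_le, hVW_nonneg] with ω hVn hWnn hωE
    simp only [hE_def, Set.mem_setOf_eq, Finset.le_sup'_iff, Finset.mem_range,
      Nat.lt_succ_iff] at hωE
    obtain ⟨k, hk, hkt⟩ := hωE
    simp only [hE'_def, Set.mem_setOf_eq, Finset.le_sup'_iff, Finset.mem_range,
      Nat.lt_succ_iff]
    refine ⟨k, hk, ?_⟩
    have hVk : V k ω ≤ v := by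
      have : V k ω ≤ V n ω := by
        apply Finset.sum_le_sum_of_subset_of_nonneg
          (Finset.range_subset_range.mpr hk)
        intro i _ _
        exact hWnn i
      linarith
    have hXk : Xc k ω = X k ω := by simp only [hXc_def, min_eq_left hk]
    simp only [hY_def, hε_def]
    apply Real.exp_le_exp.2
    have h1 : h * t ≤ h * Xc k ω := by
      rw [hXk]; exact mul_le_mul_of_nonneg_left hkt hh.le
    have h2 : g * V k ω ≤ g * v := mul_le_mul_of_nonneg_left hVk hg0
    linarith
  have hEmeas : μ E ≤ μ E' := measure_mono_ae hEE'
  -- final scalar inequality: 1/ε ≤ exp(rhs)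
  have hfinal : 1 / ε ≤ Real.exp (-t ^ 2 / (2 * v * (1 + b * t / (3 * v)))) := by
    rw [hε_def, one_div, ← Real.exp_neg]
    apply Real.exp_le_exp.2
    -- need: -(h*t - g*v) ≤ -t^2/(2*v*(1 + b*t/(3*v)))
    have hx0 : 0 ≤ h * b := by positivity
    have hx3 : h * b < 3 := by
      rw [hh_def, div_mul_eq_mul_div, div_lt_iff₀ hvbt]
      nlinarith
    have hser := series_bound hx0 hx3
    have hone : 1 - h * b / 3 = v / (v + b * t / 3) := by
      rw [hh_def]
      field_simp
      ring
    have hgv : g * v ≤ h * t / 2 := by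
      rw [hg_def]
      rw [div_mul_eq_mul_div, div_le_div_iff₀ (by positivity) (by norm_num)]
      calc (Real.exp (h * b) - 1 - h * b) * v * 2
          ≤ (h * b) ^ 2 / (2 * (1 - h * b / 3)) * v * 2 := by nlinarith
        _ = h * t * b ^ 2 := by
            rw [hone, hh_def]
            field_simp
    have hrhs : -t ^ 2 / (2 * v * (1 + b * t / (3 * v))) = -(h * t) / 2 := by
      rw [hh_def]
      field_simp
    rw [hrhs]
    linarith
  calc (μ E).toReal ≤ (μ E').toReal :=
        ENNReal.toReal_mono (measure_ne_top μ E') hEmeas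
    _ ≤ 1 / ε := hE'_bound
    _ ≤ Real.exp (-t ^ 2 / (2 * v * (1 + b * t / (3 * v)))) := hfinal
end

section
/- In the truncated-sum model for sampling without replacement, both K_i = (nμ⁺ − R_i)/(n − i) and K̃_i = (iμ⁺ − R_i)/(n − i), defined for 0 ≤ i ≤ n−1, are martingales with respect to the filtration (F_i)_{0≤i≤n−1}. -/
open MeasureTheory Finset
open scoped ENNReal

/-- The σ-algebra generated by the first `i` draws `C_1, …, C_i`, where
`C_j = c (π j)` for a permutation `π`. -/
noncomputable def sigmaUpTo {n : ℕ} (c : Fin n → ℕ) (i : ℕ) :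
    MeasurableSpace (Equiv.Perm (Fin n)) :=
  ⨆ j : Fin n, ⨆ _ : (j : ℕ) < i,
    MeasurableSpace.comap (fun π : Equiv.Perm (Fin n) => c (π j)) ⊤

/-- The truncated summand, as a function of the value drawn. -/
noncomputable def stmt7f (t : ℕ) : ℕ → ℝ := fun x => if t + 1 ≤ x then (x : ℝ) - 1 else 0

/-- Sets measurable for `sigmaUpTo c i` are invariant under right multiplication by a
permutation fixing the first `i` indices. -/
lemma stmt7_inv {n : ℕ} (c : Fin n → ℕ) (i : ℕ) (e : Equiv.Perm (Fin n))
    (he : ∀ j : Fin n, (j : ℕ) < i → e j = j) {A : Set (Equiv.Perm (Fin n))}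
    (hA : MeasurableSet[sigmaUpTo c i] A) : ∀ π, π * e ∈ A ↔ π ∈ A := by
  let M : MeasurableSpace (Equiv.Perm (Fin n)) :=
    { MeasurableSet' := fun A => (fun π => π * e) ⁻¹' A = A
      measurableSet_empty := rfl
      measurableSet_compl := fun A h => by
        simp only [Set.preimage_compl, h]
      measurableSet_iUnion := fun s h => by
        simp only [Set.preimage_iUnion]
        exact Set.iUnion_congr h }
  have hle : sigmaUpTo c i ≤ M := by
    refine iSup_le fun j => iSup_le fun hj => ?_
    intro A hA
    obtain ⟨B, -, rfl⟩ := hA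
    show (fun π : Equiv.Perm (Fin n) => π * e) ⁻¹' _ = _
    ext π
    simp only [Set.mem_preimage, Equiv.Perm.mul_apply, he j hj]
  have := hle A hA
  exact fun π => Set.ext_iff.mp this π

/-- The key exchangeability identity: summing the draw at position `i` over an invariant
set equals the average of the remaining draws. -/
lemma stmt7_core {n : ℕ} (c : Fin n → ℕ) (f : ℕ → ℝ) (i : ℕ) (hi : i < n)
    (s : Finset (Equiv.Perm (Fin n)))
    (hs : ∀ (k : Fin n), i ≤ (k : ℕ) → ∀ π : Equiv.Perm (Fin n),
      π * Equiv.swap ⟨i, hi⟩ k ∈ s ↔ π ∈ s) :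
    ∑ π ∈ s, ∑ k ∈ Finset.univ.filter (fun k : Fin n => i ≤ (k : ℕ)), f (c (π k))
      = (n - i : ℕ) * ∑ π ∈ s, f (c (π ⟨i, hi⟩)) := by
  rw [Finset.sum_comm]
  have hfe : Finset.univ.filter (fun k : Fin n => i ≤ (k : ℕ)) = Finset.Ici (⟨i, hi⟩ : Fin n) := by
    ext k; simp [Fin.le_def]
  have heach : ∀ k ∈ Finset.univ.filter (fun k : Fin n => i ≤ (k : ℕ)),
      ∑ π ∈ s, f (c (π k)) = ∑ π ∈ s, f (c (π ⟨i, hi⟩)) := by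
    intro k hk
    simp only [Finset.mem_filter, Finset.mem_univ, true_and] at hk
    refine Finset.sum_nbij' (fun π => π * Equiv.swap ⟨i, hi⟩ k)
      (fun π => π * Equiv.swap ⟨i, hi⟩ k) ?_ ?_ ?_ ?_ ?_
    · intro a ha; exact (hs k hk a).mpr ha
    · intro a ha; exact (hs k hk a).mpr ha
    · intro a ha; simp [mul_assoc]
    · intro a ha; simp [mul_assoc]
    · intro a ha
      simp [Equiv.Perm.mul_apply, Equiv.swap_apply_right]
  rw [Finset.sum_congr rfl heach, Finset.sum_const, hfe, Fin.card_Ici, nsmul_eq_mul]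

/-- Truncated-sum model for sampling without replacement: both
`K_i = (n μ⁺ - R_i)/(n - i)` and `K̃_i = (i μ⁺ - R_i)/(n - i)`, `0 ≤ i ≤ n - 1`,
are martingales with respect to the filtration `(F_i)_{0 ≤ i ≤ n-1}`: each is
adapted, integrable, and satisfies `E[K_{i+1} | F_i] = K_i` a.s. for `i ≤ n - 2`. -/
theorem stmt7 {n : ℕ} (hn : 1 ≤ n) (t : ℕ) (c : Fin n → ℕ)
    [m0 : MeasurableSpace (Equiv.Perm (Fin n))] (hm0 : m0 = ⊤)
    (μ : Measure (Equiv.Perm (Fin n)))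
    (hμ : μ = ((Nat.factorial n : ℝ≥0∞))⁻¹ • Measure.count)
    (R : ℕ → Equiv.Perm (Fin n) → ℝ)
    (hR0 : ∀ π, R 0 π = 0)
    (hRstep : ∀ i (hi : i < n) (π : Equiv.Perm (Fin n)),
      R (i + 1) π = R i π +
        (if t + 1 ≤ c (π ⟨i, hi⟩) then (c (π ⟨i, hi⟩) : ℝ) - 1 else 0))
    (μplus : ℝ)
    (hμplus : μplus = (∑ j : Fin n, if t + 1 ≤ c j then (c j : ℝ) - 1 else 0) / n)
    (K Kt : ℕ → Equiv.Perm (Fin n) → ℝ)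
    (hK : ∀ i π, K i π = ((n : ℝ) * μplus - R i π) / ((n : ℝ) - i))
    (hKt : ∀ i π, Kt i π = ((i : ℝ) * μplus - R i π) / ((n : ℝ) - i)) :
    (∀ i, i + 1 ≤ n → StronglyMeasurable[sigmaUpTo c i] (K i)
        ∧ StronglyMeasurable[sigmaUpTo c i] (Kt i)
        ∧ Integrable (K i) μ ∧ Integrable (Kt i) μ)
      ∧ (∀ i, i + 2 ≤ n → μ[K (i + 1) | sigmaUpTo c i] =ᵐ[μ] K i)
      ∧ (∀ i, i + 2 ≤ n → μ[Kt (i + 1) | sigmaUpTo c i] =ᵐ[μ] Kt i) := by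
  classical
  have hmset : ∀ s : Set (Equiv.Perm (Fin n)), MeasurableSet s := by
    intro s; rw [hm0]; exact MeasurableSpace.measurableSet_top
  haveI : MeasurableSingletonClass (Equiv.Perm (Fin n)) := ⟨fun x => hmset {x}⟩
  haveI : IsFiniteMeasure μ := by
    constructor
    rw [hμ]
    simp only [Measure.smul_apply, smul_eq_mul]
    exact ENNReal.mul_lt_top (by simp [Nat.factorial_pos]) (by
      simpa using (Measure.count_apply_lt_top (s := (Set.univ : Set (Equiv.Perm (Fin n))))).2
        (Set.finite_univ))
  -- the ℕ-cast fact `n ≠ 0` in ℝ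
  have hn0 : (n : ℝ) ≠ 0 := by positivity
  -- closed form for R
  have hRform : ∀ i, i ≤ n → ∀ π, R i π =
      ∑ j ∈ Finset.univ.filter (fun j : Fin n => (j : ℕ) < i), stmt7f t (c (π j)) := by
    intro i
    induction i with
    | zero => intro _ π; simp [hR0]
    | succ i ih =>
      intro hi π
      have hi' : i < n := by omega
      have hins : Finset.univ.filter (fun j : Fin n => (j : ℕ) < i + 1)
          = insert (⟨i, hi'⟩ : Fin n) (Finset.univ.filter (fun j : Fin n => (j : ℕ) < i)) := by
        ext j
        simp only [Finset.mem_filter, Finset.mem_univ, true_and, Finset.mem_insert, Fin.ext_iff]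
        omega
      rw [hRstep i hi' π, ih (by omega) π, hins, Finset.sum_insert (by simp)]
      show _ + stmt7f t (c (π ⟨i, hi'⟩)) = _
      ring
  -- n * μplus equals the total sum
  have hS : (n : ℝ) * μplus = ∑ j : Fin n, stmt7f t (c j) := by
    rw [hμplus]
    field_simp
    rfl
  -- the residual form
  have hW : ∀ i, i ≤ n → ∀ π : Equiv.Perm (Fin n), (n : ℝ) * μplus - R i π =
      ∑ k ∈ Finset.univ.filter (fun k : Fin n => i ≤ (k : ℕ)), stmt7f t (c (π k)) := by
    intro i hi π
    rw [hS, hRform i hi π]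
    have hsplit := Finset.sum_filter_add_sum_filter_not Finset.univ
      (fun j : Fin n => (j : ℕ) < i) (fun j => stmt7f t (c (π j)))
    have hcomp : ∑ j : Fin n, stmt7f t (c j) = ∑ j : Fin n, stmt7f t (c (π j)) :=
      (Equiv.sum_comp π (fun j => stmt7f t (c j))).symm
    have hfilt : Finset.univ.filter (fun j : Fin n => ¬ (j : ℕ) < i)
        = Finset.univ.filter (fun k : Fin n => i ≤ (k : ℕ)) := by
      ext k; simp [not_lt]
    rw [hcomp, ← hsplit, hfilt]
    ring
  -- monotonicity of the filtration
  have hmono : ∀ i j : ℕ, i ≤ j → sigmaUpTo c i ≤ sigmaUpTo c j := by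
    intro i j hij
    refine iSup_le fun k => iSup_le fun hk => ?_
    exact le_iSup₂ (f := fun (k : Fin n) (_ : (k : ℕ) < j) =>
      MeasurableSpace.comap (fun π : Equiv.Perm (Fin n) => c (π k)) ⊤) k (lt_of_lt_of_le hk hij)
  -- measurability of R i w.r.t. sigmaUpTo c i
  have hRmeas : ∀ i, i ≤ n → Measurable[sigmaUpTo c i] (R i) := by
    intro i
    induction i with
    | zero =>
      intro _
      have : R 0 = fun _ => (0 : ℝ) := funext hR0
      rw [this]; exact measurable_const
    | succ i ih =>
      intro hi
      have hi' : i < n := by omega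
      have hfun : R (i + 1) = fun π => R i π + stmt7f t (c (π ⟨i, hi'⟩)) :=
        funext fun π => hRstep i hi' π
      rw [hfun]
      have h1 : Measurable[sigmaUpTo c (i + 1)] (R i) :=
        (ih (by omega)).mono (hmono i (i + 1) (by omega)) le_rfl
      have h2 : Measurable[sigmaUpTo c (i + 1)]
          (fun π : Equiv.Perm (Fin n) => c (π ⟨i, hi'⟩)) := by
        have hbase : Measurable[MeasurableSpace.comap
            (fun π : Equiv.Perm (Fin n) => c (π ⟨i, hi'⟩)) ⊤]
            (fun π : Equiv.Perm (Fin n) => c (π ⟨i, hi'⟩)) :=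
          measurable_iff_comap_le.mpr le_rfl
        exact hbase.mono (le_iSup₂ (f := fun (k : Fin n) (_ : (k : ℕ) < i + 1) =>
          MeasurableSpace.comap (fun π : Equiv.Perm (Fin n) => c (π k)) ⊤)
          ⟨i, hi'⟩ (by simp)) le_rfl
      have h3 : Measurable (stmt7f t) := measurable_from_top
      exact h1.add (h3.comp h2)
  have hKmeas : ∀ i, i ≤ n → Measurable[sigmaUpTo c i] (K i) := by
    intro i hi
    have : K i = fun π => ((n : ℝ) * μplus - R i π) / ((n : ℝ) - i) := funext (hK i)
    rw [this]
    exact (measurable_const.sub (hRmeas i hi)).div measurable_const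
  have hKtmeas : ∀ i, i ≤ n → Measurable[sigmaUpTo c i] (Kt i) := by
    intro i hi
    have : Kt i = fun π => ((i : ℝ) * μplus - R i π) / ((n : ℝ) - i) := funext (hKt i)
    rw [this]
    exact (measurable_const.sub (hRmeas i hi)).div measurable_const
  -- integral-to-sum conversion
  have hIS : ∀ (g : Equiv.Perm (Fin n) → ℝ) (s : Set (Equiv.Perm (Fin n))),
      ∫ x in s, g x ∂μ = ((n.factorial : ℝ))⁻¹ * ∑ π ∈ Finset.univ.filter (· ∈ s), g π := by
    intro g s
    rw [← integral_indicator (hmset s)]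
    rw [integral_fintype Integrable.of_finite]
    have hμx : ∀ x : Equiv.Perm (Fin n), (μ {x}).toReal = ((n.factorial : ℝ))⁻¹ := by
      intro x
      rw [hμ]
      simp [Measure.smul_apply, Measure.count_singleton, ENNReal.toReal_inv]
    calc ∑ x, (μ {x}).toReal • s.indicator g x
        = ∑ x, ((n.factorial : ℝ))⁻¹ * s.indicator g x := by
          refine Finset.sum_congr rfl fun x _ => ?_
          rw [hμx x, smul_eq_mul]
      _ = ((n.factorial : ℝ))⁻¹ * ∑ x, s.indicator g x := by rw [Finset.mul_sum]
      _ = ((n.factorial : ℝ))⁻¹ * ∑ π ∈ Finset.univ.filter (· ∈ s), g π := by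
          congr 1
          rw [Finset.sum_filter]
          exact Finset.sum_congr rfl fun x _ => by simp [Set.indicator_apply]
  -- the main set-integral computation
  have hmain : ∀ i, i + 2 ≤ n → ∀ s : Set (Equiv.Perm (Fin n)),
      MeasurableSet[sigmaUpTo c i] s →
      ((∫ x in s, K i x ∂μ = ∫ x in s, K (i + 1) x ∂μ)
        ∧ (∫ x in s, Kt i x ∂μ = ∫ x in s, Kt (i + 1) x ∂μ)) := by
    intro i hi s hsm
    have hi' : i < n := by omega
    set s' : Finset (Equiv.Perm (Fin n)) := Finset.univ.filter (· ∈ s) with hs'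
    -- invariance of s' under the relevant swaps
    have hinv : ∀ (k : Fin n), i ≤ (k : ℕ) → ∀ π : Equiv.Perm (Fin n),
        π * Equiv.swap ⟨i, hi'⟩ k ∈ s' ↔ π ∈ s' := by
      intro k hk π
      have he : ∀ j : Fin n, (j : ℕ) < i → (Equiv.swap (⟨i, hi'⟩ : Fin n) k) j = j := by
        intro j hj
        refine Equiv.swap_apply_of_ne_of_ne (Fin.ne_of_val_ne ?_) (Fin.ne_of_val_ne ?_)
        · show (j : ℕ) ≠ i; omega
        · omega
      have := stmt7_inv c i (Equiv.swap ⟨i, hi'⟩ k) he hsm π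
      simp only [hs', Finset.mem_filter, Finset.mem_univ, true_and]
      exact this
    have hcore := stmt7_core c (stmt7f t) i hi' s' hinv
    set g0 : ℝ := ∑ π ∈ s', stmt7f t (c (π ⟨i, hi'⟩)) with hg0
    -- sum of (n μ⁺ - R i) over s'
    have hsumW : ∑ π ∈ s', ((n : ℝ) * μplus - R i π) = ((n : ℝ) - i) * g0 := by
      have h1 : ∀ π ∈ s', (n : ℝ) * μplus - R i π =
          ∑ k ∈ Finset.univ.filter (fun k : Fin n => i ≤ (k : ℕ)), stmt7f t (c (π k)) :=
        fun π _ => hW i (by omega) π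
      rw [Finset.sum_congr rfl h1, hcore]
      congr 1
      rw [Nat.cast_sub (le_of_lt hi')]
    have hsumR : ∑ π ∈ s', R i π = (s'.card : ℝ) * ((n : ℝ) * μplus) - ((n : ℝ) - i) * g0 := by
      have := hsumW
      rw [Finset.sum_sub_distrib, Finset.sum_const, nsmul_eq_mul] at this
      linarith
    have hD : (n : ℝ) - i ≠ 0 := by
      have : (i : ℝ) < n := by exact_mod_cast hi'
      linarith
    have hD1 : (n : ℝ) - i - 1 ≠ 0 := by
      have : (i : ℝ) + 2 ≤ n := by exact_mod_cast hi
      linarith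
    have hred : ∀ π : Equiv.Perm (Fin n),
        (if t + 1 ≤ c (π ⟨i, hi'⟩) then (c (π ⟨i, hi'⟩) : ℝ) - 1 else 0)
          = stmt7f t (c (π ⟨i, hi'⟩)) := fun _ => rfl
    -- the four sums
    have eK : ∑ π ∈ s', K i π = g0 := by
      have h1 : ∀ π ∈ s', K i π = ((n : ℝ) * μplus - R i π) / ((n : ℝ) - i) :=
        fun π _ => hK i π
      rw [Finset.sum_congr rfl h1, ← Finset.sum_div, hsumW]
      field_simp
    have eK1 : ∑ π ∈ s', K (i + 1) π = g0 := by
      have h1 : ∀ π ∈ s', K (i + 1) π =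
          (((n : ℝ) * μplus - R i π) - stmt7f t (c (π ⟨i, hi'⟩))) / ((n : ℝ) - i - 1) := by
        intro π _
        rw [hK (i + 1) π, hRstep i hi' π, hred π]
        push_cast
        ring
      rw [Finset.sum_congr rfl h1, ← Finset.sum_div, Finset.sum_sub_distrib, hsumW, ← hg0]
      field_simp
    have eKt : ∑ π ∈ s', Kt i π = g0 - (s'.card : ℝ) * μplus := by
      have h1 : ∀ π ∈ s', Kt i π = ((i : ℝ) * μplus - R i π) / ((n : ℝ) - i) :=
        fun π _ => hKt i π
      rw [Finset.sum_congr rfl h1, ← Finset.sum_div, Finset.sum_sub_distrib, Finset.sum_const,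
        nsmul_eq_mul, hsumR]
      field_simp
      ring
    have eKt1 : ∑ π ∈ s', Kt (i + 1) π = g0 - (s'.card : ℝ) * μplus := by
      have h1 : ∀ π ∈ s', Kt (i + 1) π =
          (((i : ℝ) + 1) * μplus - R i π - stmt7f t (c (π ⟨i, hi'⟩))) / ((n : ℝ) - i - 1) := by
        intro π _
        rw [hKt (i + 1) π, hRstep i hi' π, hred π]
        push_cast
        ring
      rw [Finset.sum_congr rfl h1, ← Finset.sum_div, Finset.sum_sub_distrib,
        Finset.sum_sub_distrib, Finset.sum_const, nsmul_eq_mul, hsumR, ← hg0]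
      field_simp
      ring
    constructor
    · rw [hIS (K i) s, hIS (K (i + 1)) s, ← hs', eK, eK1]
    · rw [hIS (Kt i) s, hIS (Kt (i + 1)) s, ← hs', eKt, eKt1]
  refine ⟨?_, ?_, ?_⟩
  · intro i hi
    exact ⟨(hKmeas i (by omega)).stronglyMeasurable, (hKtmeas i (by omega)).stronglyMeasurable,
      Integrable.of_finite, Integrable.of_finite⟩
  · intro i hi
    have hle : sigmaUpTo c i ≤ m0 := by rw [hm0]; exact le_top
    refine (ae_eq_condExp_of_forall_setIntegral_eq hle Integrable.of_finite
      (fun s _ _ => Integrable.of_finite.integrableOn)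
      (fun s hs _ => (hmain i hi s hs).1)
      (((hKmeas i (by omega)).stronglyMeasurable).aestronglyMeasurable)).symm
  · intro i hi
    have hle : sigmaUpTo c i ≤ m0 := by rw [hm0]; exact le_top
    refine (ae_eq_condExp_of_forall_setIntegral_eq hle Integrable.of_finite
      (fun s _ _ => Integrable.of_finite.integrableOn)
      (fun s hs _ => (hmain i hi s hs).2)
      (((hKtmeas i (by omega)).stronglyMeasurable).aestronglyMeasurable)).symm
end

section
/- In the truncated-sum model for sampling without replacement, for every integer 0 ≤ s ≤ n one has E[(R_s − sμ⁺)²] ≤ s·(σ⁺)². -/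
open Finset


private lemma perm_reindex {n : ℕ} (σ : Equiv.Perm (Fin n)) (G : Equiv.Perm (Fin n) → ℝ) :
    ∑ π : Equiv.Perm (Fin n), G (π * σ) = ∑ π : Equiv.Perm (Fin n), G π :=
  Equiv.sum_comp (Equiv.mulRight σ) G

private lemma single_eq {n : ℕ} (F : Fin n → ℝ) (i k : Fin n) :
    ∑ π : Equiv.Perm (Fin n), F (π i) = ∑ π : Equiv.Perm (Fin n), F (π k) := by
  have h := perm_reindex (Equiv.swap i k) (fun π => F (π k))
  simpa [Equiv.Perm.mul_apply, Equiv.swap_apply_right] using h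

private lemma pair_eq {n : ℕ} (Y : Fin n → ℝ) {i j k l : Fin n} (hij : i ≠ j) (hkl : k ≠ l) :
    ∑ π : Equiv.Perm (Fin n), Y (π i) * Y (π j)
      = ∑ π : Equiv.Perm (Fin n), Y (π k) * Y (π l) := by
  classical
  have hτl : Equiv.swap i k l ≠ i := by
    intro h
    have h2 := congrArg (Equiv.swap i k) h
    rw [Equiv.swap_apply_self, Equiv.swap_apply_left] at h2
    exact hkl h2.symm
  obtain ⟨σ, hσk, hσl⟩ : ∃ σ : Equiv.Perm (Fin n), σ k = i ∧ σ l = j := by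
    refine ⟨Equiv.swap j (Equiv.swap i k l) * Equiv.swap i k, ?_, ?_⟩
    · rw [Equiv.Perm.mul_apply, Equiv.swap_apply_right]
      exact Equiv.swap_apply_of_ne_of_ne hij (Ne.symm hτl)
    · rw [Equiv.Perm.mul_apply, Equiv.swap_apply_right]
  have h := perm_reindex σ (fun π => Y (π k) * Y (π l))
  simp only [Equiv.Perm.mul_apply, hσk, hσl] at h
  exact h

/-- Truncated-sum model for sampling without replacement: under the uniform measure
on permutations, `E[(R_s - s μ⁺)²] ≤ s (σ⁺)²` for every `0 ≤ s ≤ n`. -/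
theorem stmt9 {n : ℕ} (hn : 1 ≤ n) (t : ℕ) (c : Fin n → ℕ)
    (R : ℕ → Equiv.Perm (Fin n) → ℝ)
    (hR0 : ∀ π, R 0 π = 0)
    (hRstep : ∀ i (hi : i < n) (π : Equiv.Perm (Fin n)),
      R (i + 1) π = R i π +
        (if t + 1 ≤ c (π ⟨i, hi⟩) then (c (π ⟨i, hi⟩) : ℝ) - 1 else 0))
    (μplus : ℝ)
    (hμplus : μplus = (∑ j : Fin n, if t + 1 ≤ c j then (c j : ℝ) - 1 else 0) / n)
    (σplus2 : ℝ)
    (hσplus2 : σplus2 =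
      (∑ j : Fin n, if t + 1 ≤ c j then (c j : ℝ) * ((c j : ℝ) - 1) else 0) / n)
    (s : ℕ) (hs : s ≤ n) :
    (∑ π : Equiv.Perm (Fin n), (R s π - (s : ℝ) * μplus) ^ 2) / (Nat.factorial n : ℝ)
      ≤ (s : ℝ) * σplus2 := by
  classical
  have hn0 : (0:ℝ) < (n:ℝ) := by exact_mod_cast hn
  set X : Fin n → ℝ := fun k => if t + 1 ≤ c k then (c k : ℝ) - 1 else 0 with hX
  have hμ : μplus = (∑ j, X j) / n := hμplus
  set Y : Fin n → ℝ := fun k => X k - μplus with hY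
  have hXsum : ∑ j, X j = (n:ℝ) * μplus := by rw [hμ]; field_simp
  have hYsum : ∑ k, Y k = 0 := by
    simp only [hY, Finset.sum_sub_distrib, Finset.sum_const, card_univ, Fintype.card_fin,
      nsmul_eq_mul, hXsum]
    ring
  -- R as a sum
  have hRsum : ∀ m (hm : m ≤ n) (π : Equiv.Perm (Fin n)),
      R m π = ∑ i : Fin m, X (π (Fin.castLE hm i)) := by
    intro m
    induction m with
    | zero => intro hm π; simp [hR0]
    | succ p ih =>
      intro hm π
      have hp : p < n := hm
      rw [hRstep p hp π, ih (le_of_lt hp) π, Fin.sum_univ_castSucc]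
      congr 1
  set A : Fin n → Fin n → ℝ := fun i j => ∑ π : Equiv.Perm (Fin n), Y (π i) * Y (π j) with hA
  have hA_diag_nonneg : ∀ i, 0 ≤ A i i :=
    fun i => Finset.sum_nonneg fun π _ => mul_self_nonneg _
  have hA_diag_eq : ∀ i k, A i i = A k k := fun i k => single_eq (fun x => Y x * Y x) i k
  have hrow : ∀ i, ∑ j, A i j = 0 := by
    intro i
    show ∑ j, ∑ π : Equiv.Perm (Fin n), Y (π i) * Y (π j) = 0
    rw [Finset.sum_comm]
    refine Finset.sum_eq_zero fun π _ => ?_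
    rw [← Finset.mul_sum, Equiv.sum_comp π Y, hYsum, mul_zero]
  have hoffdiag : ∀ i j, i ≠ j → A i j ≤ 0 := by
    intro i j hij
    have hn2 : 1 < n := by
      have := Fintype.one_lt_card_iff.mpr ⟨i, j, hij⟩
      rwa [Fintype.card_fin] at this
    have h0 := hrow i
    rw [← Finset.add_sum_erase _ _ (Finset.mem_univ i),
      Finset.sum_congr rfl (fun l hl => pair_eq Y (Ne.symm (Finset.mem_erase.mp hl).1) hij),
      Finset.sum_const, Finset.card_erase_of_mem (Finset.mem_univ i), card_univ,
      Fintype.card_fin, nsmul_eq_mul] at h0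
    have hc : (0:ℝ) < ((n - 1 : ℕ) : ℝ) := by
      have : 1 ≤ n - 1 := by omega
      exact_mod_cast Nat.lt_of_lt_of_le Nat.zero_lt_one this
    by_contra hpos
    push_neg at hpos
    have := mul_pos hc hpos
    have hd := hA_diag_nonneg i
    linarith
  have hdiagsum : ∑ i : Fin n, A i i = (Nat.factorial n : ℝ) * ∑ k, Y k * Y k := by
    show ∑ i : Fin n, ∑ π : Equiv.Perm (Fin n), Y (π i) * Y (π i)
        = (Nat.factorial n : ℝ) * ∑ k, Y k * Y k
    rw [Finset.sum_comm]
    rw [Finset.sum_congr rfl (fun π _ => Equiv.sum_comp π (fun k => Y k * Y k)),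
      Finset.sum_const, card_univ, Fintype.card_perm, Fintype.card_fin, nsmul_eq_mul]
  have hAii : ∀ i, (n:ℝ) * A i i = (Nat.factorial n : ℝ) * ∑ k, Y k * Y k := by
    intro i
    rw [← hdiagsum, Finset.sum_congr rfl (fun l _ => hA_diag_eq l i), Finset.sum_const,
      card_univ, Fintype.card_fin, nsmul_eq_mul]
  -- bound on ∑ Y²
  have hXc : ∀ k, X k * X k ≤ (c k : ℝ) * X k := by
    intro k
    by_cases h : t + 1 ≤ c k
    · have h1 : (1:ℝ) ≤ (c k : ℝ) := by exact_mod_cast Nat.le_trans (by omega) h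
      simp only [hX, if_pos h]
      nlinarith
    · simp only [hX, if_neg h]; simp
  have hcX : ∑ k, (c k : ℝ) * X k = (n:ℝ) * σplus2 := by
    have hck : ∀ k : Fin n, (c k : ℝ) * X k
        = if t + 1 ≤ c k then (c k : ℝ) * ((c k : ℝ) - 1) else 0 := by
      intro k; by_cases h : t + 1 ≤ c k <;> simp only [hX, h, ↓reduceIte, mul_zero]
    rw [hσplus2, Finset.sum_congr rfl fun k _ => hck k]
    field_simp
  have hYle : ∑ k, Y k * Y k ≤ (n:ℝ) * σplus2 := by
    have hexp : ∑ k, Y k * Y k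
        = ∑ k, X k * X k - 2 * μplus * ((n:ℝ) * μplus) + (n:ℝ) * μplus ^ 2 := by
      have : ∀ k : Fin n, Y k * Y k = X k * X k - 2 * μplus * X k + μplus ^ 2 := by
        intro k; simp only [hY]; ring
      rw [Finset.sum_congr rfl (fun k _ => this k), Finset.sum_add_distrib,
        Finset.sum_sub_distrib, ← Finset.mul_sum, hXsum, Finset.sum_const, card_univ,
        Fintype.card_fin, nsmul_eq_mul]
    have hsq : 0 ≤ (n:ℝ) * μplus ^ 2 := by positivity
    have h2 : ∑ k, X k * X k ≤ ∑ k, (c k : ℝ) * X k := Finset.sum_le_sum fun k _ => hXc k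
    rw [hcX] at h2
    nlinarith [hexp]
  -- main expansion
  set i0 : Fin n := ⟨0, hn⟩ with hi0
  have hmain : ∑ π : Equiv.Perm (Fin n), (R s π - (s : ℝ) * μplus) ^ 2
      = ∑ i : Fin s, ∑ j : Fin s, A (Fin.castLE hs i) (Fin.castLE hs j) := by
    have hRY : ∀ π : Equiv.Perm (Fin n),
        R s π - (s : ℝ) * μplus = ∑ i : Fin s, Y (π (Fin.castLE hs i)) := by
      intro π
      rw [hRsum s hs π]
      simp only [hY, Finset.sum_sub_distrib, Finset.sum_const, card_univ, Fintype.card_fin,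
        nsmul_eq_mul]
    calc ∑ π : Equiv.Perm (Fin n), (R s π - (s : ℝ) * μplus) ^ 2
        = ∑ π : Equiv.Perm (Fin n), ∑ i : Fin s, ∑ j : Fin s,
            Y (π (Fin.castLE hs i)) * Y (π (Fin.castLE hs j)) :=
          Finset.sum_congr rfl fun π _ => by rw [hRY π, sq, Finset.sum_mul_sum]
      _ = ∑ i : Fin s, ∑ π : Equiv.Perm (Fin n), ∑ j : Fin s,
            Y (π (Fin.castLE hs i)) * Y (π (Fin.castLE hs j)) := Finset.sum_comm
      _ = ∑ i : Fin s, ∑ j : Fin s, A (Fin.castLE hs i) (Fin.castLE hs j) :=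
          Finset.sum_congr rfl fun i _ => Finset.sum_comm
  have hbound : ∑ i : Fin s, ∑ j : Fin s, A (Fin.castLE hs i) (Fin.castLE hs j)
      ≤ (s:ℝ) * A i0 i0 := by
    have hper : ∀ i : Fin s, ∑ j : Fin s, A (Fin.castLE hs i) (Fin.castLE hs j) ≤ A i0 i0 := by
      intro i
      rw [← Finset.add_sum_erase _ _ (Finset.mem_univ i), hA_diag_eq (Fin.castLE hs i) i0]
      have : ∑ j ∈ Finset.univ.erase i, A (Fin.castLE hs i) (Fin.castLE hs j) ≤ 0 := by
        apply Finset.sum_nonpos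
        intro j hj
        exact hoffdiag _ _ ((Fin.castLE_injective hs).ne (Ne.symm (Finset.mem_erase.mp hj).1))
      linarith
    calc ∑ i : Fin s, ∑ j : Fin s, A (Fin.castLE hs i) (Fin.castLE hs j)
        ≤ ∑ _i : Fin s, A i0 i0 := Finset.sum_le_sum fun i _ => hper i
      _ = (s:ℝ) * A i0 i0 := by
          rw [Finset.sum_const, card_univ, Fintype.card_fin, nsmul_eq_mul]
  -- finish
  have hfac : (0:ℝ) < (Nat.factorial n : ℝ) := by exact_mod_cast Nat.factorial_pos n
  rw [div_le_iff₀ hfac]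
  have hAle : A i0 i0 ≤ (Nat.factorial n : ℝ) * σplus2 := by
    have h1 := hAii i0
    have h2 : (n:ℝ) * A i0 i0 ≤ (Nat.factorial n : ℝ) * ((n:ℝ) * σplus2) := by
      rw [h1]
      exact mul_le_mul_of_nonneg_left hYle (le_of_lt hfac)
    have h3 : (n:ℝ) * A i0 i0 ≤ (n:ℝ) * ((Nat.factorial n : ℝ) * σplus2) := by
      rw [show (Nat.factorial n : ℝ) * ((n:ℝ) * σplus2) = (n:ℝ) * ((Nat.factorial n : ℝ) * σplus2) by ring] at h2
      exact h2
    exact le_of_mul_le_mul_left h3 hn0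
  calc ∑ π : Equiv.Perm (Fin n), (R s π - (s : ℝ) * μplus) ^ 2
      ≤ (s:ℝ) * A i0 i0 := by rw [hmain]; exact hbound
    _ ≤ (s:ℝ) * ((Nat.factorial n : ℝ) * σplus2) :=
        mul_le_mul_of_nonneg_left hAle (Nat.cast_nonneg s)
    _ = (s:ℝ) * σplus2 * (Nat.factorial n : ℝ) := by ring
end

section
/- In the truncated-sum model for sampling without replacement, for every integer s with 1 ≤ s ≤ n/2 and all reals ε > 0 and a > 0, P(max_{0≤i≤s} |iμ⁺ − R_i| > εa) ≤ 16·s·(σ⁺)² / (ε²a²). -/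
open Finset

open Finset Equiv


private lemma card_filter_fin (n : ℕ) (p : ℕ → Prop) [DecidablePred p] :
    ((Finset.univ : Finset (Fin n)).filter (fun v => p v.1)).card
      = ((Finset.range n).filter p).card := by
  refine Finset.card_bij (fun v _ => v.1) ?_ ?_ ?_
  · intro a ha
    simp only [Finset.mem_filter, Finset.mem_range, Finset.mem_univ, true_and] at ha ⊢
    exact ⟨a.2, ha⟩
  · intro a _ b _ hab; exact Fin.ext hab
  · intro b hb
    simp only [Finset.mem_filter, Finset.mem_range] at hb
    exact ⟨⟨b, hb.1⟩, by simp [hb.2], rfl⟩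

private lemma sum_swap_pos {n : ℕ} (h : Fin n → ℝ) (A : Finset (Perm (Fin n)))
    (g : Perm (Fin n) → ℝ) (i : ℕ)
    (hA : ∀ π σ : Perm (Fin n), (∀ m : Fin n, (m : ℕ) < i → π m = σ m) → π ∈ A → σ ∈ A)
    (hg : ∀ π σ : Perm (Fin n), (∀ m : Fin n, (m : ℕ) < i → π m = σ m) → g π = g σ)
    (j k : Fin n) (hj : i ≤ (j : ℕ)) (hk : i ≤ (k : ℕ)) :
    ∑ π ∈ A, g π * h (π j) = ∑ π ∈ A, g π * h (π k) := by
  have hpre : ∀ (π : Perm (Fin n)) (m : Fin n), (m : ℕ) < i →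
      (π * Equiv.swap j k) m = π m := by
    intro π m hm
    have h1 : m ≠ j := fun hh => by subst hh; omega
    have h2 : m ≠ k := fun hh => by subst hh; omega
    simp [Equiv.Perm.mul_apply, Equiv.swap_apply_of_ne_of_ne h1 h2]
  have hinv : ∀ π : Perm (Fin n), π * Equiv.swap j k * Equiv.swap j k = π := by
    intro π; rw [mul_assoc, Equiv.swap_mul_self, mul_one]
  refine Finset.sum_nbij' (fun π => π * Equiv.swap j k) (fun π => π * Equiv.swap j k)
    ?_ ?_ ?_ ?_ ?_
  · intro π hπ; exact hA π _ (fun m hm => (hpre π m hm).symm) hπ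
  · intro π hπ; exact hA π _ (fun m hm => (hpre π m hm).symm) hπ
  · intro π _; exact hinv π
  · intro π _; exact hinv π
  · intro π _
    have hgp : g π = g (π * Equiv.swap j k) := hg π _ (fun m hm => (hpre π m hm).symm)
    have hap : (π * Equiv.swap j k) k = π j := by
      simp [Equiv.Perm.mul_apply, Equiv.swap_apply_right]
    rw [hgp, hap]


private lemma sum_pair_eq {n : ℕ} (f : Fin n → ℝ) (j k j' k' : Fin n)
    (hjk : j ≠ k) (hjk' : j' ≠ k') :
    ∑ π : Perm (Fin n), f (π j) * f (π k) = ∑ π : Perm (Fin n), f (π j') * f (π k') := by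
  obtain ⟨ρ, hρj, hρk⟩ : ∃ ρ : Perm (Fin n), ρ j = j' ∧ ρ k = k' := by
    refine ⟨Equiv.swap (Equiv.swap j j' k) k' * Equiv.swap j j', ?_, ?_⟩
    · have h1 : j' ≠ Equiv.swap j j' k := by
        intro hh
        have h2 : Equiv.swap j j' j' = Equiv.swap j j' (Equiv.swap j j' k) := by rw [← hh]
        rw [Equiv.swap_apply_right, Equiv.swap_apply_self] at h2
        exact hjk h2
      have h4 : (Equiv.swap (Equiv.swap j j' k) k') j' = j' :=
        Equiv.swap_apply_of_ne_of_ne h1 hjk'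
      simp [Equiv.Perm.mul_apply, Equiv.swap_apply_left, h4]
    · simp [Equiv.Perm.mul_apply]
  have h3 : ∑ π : Perm (Fin n), f ((Equiv.mulRight ρ π) j) * f ((Equiv.mulRight ρ π) k)
      = ∑ π : Perm (Fin n), f (π j) * f (π k) :=
    Equiv.sum_comp (Equiv.mulRight ρ) (fun π => f (π j) * f (π k))
  rw [← h3]
  refine Finset.sum_congr rfl fun π _ => ?_
  simp [Equiv.Perm.mul_apply, hρj, hρk]

private lemma sum_tail_pos {n : ℕ} (h : Fin n → ℝ) (A : Finset (Perm (Fin n)))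
    (g : Perm (Fin n) → ℝ) (i : ℕ)
    (hA : ∀ π σ : Perm (Fin n), (∀ m : Fin n, (m : ℕ) < i → π m = σ m) → π ∈ A → σ ∈ A)
    (hg : ∀ π σ : Perm (Fin n), (∀ m : Fin n, (m : ℕ) < i → π m = σ m) → g π = g σ)
    (j : Fin n) (hj : i ≤ (j : ℕ)) :
    ((n - i : ℕ) : ℝ) * ∑ π ∈ A, g π * h (π j)
      = ∑ π ∈ A, g π *
          ((∑ v, h v) - ∑ v ∈ Finset.univ.filter (fun v : Fin n => (v : ℕ) < i), h (π v)) := by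
  have htail : ∀ π : Perm (Fin n),
      (∑ v, h v) - ∑ v ∈ Finset.univ.filter (fun v : Fin n => (v : ℕ) < i), h (π v)
        = ∑ v ∈ Finset.univ.filter (fun v : Fin n => ¬ (v : ℕ) < i), h (π v) := by
    intro π
    have h0 := Finset.sum_filter_add_sum_filter_not Finset.univ
      (fun v : Fin n => (v : ℕ) < i) (fun v => h (π v))
    have h1 : ∑ v, h (π v) = ∑ v, h v := Equiv.sum_comp π h
    linarith
  have hcard : (Finset.univ.filter (fun v : Fin n => ¬ (v : ℕ) < i)).card = n - i := by
    rw [card_filter_fin n (fun m => ¬ m < i)]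
    have : (Finset.range n).filter (fun m => ¬ m < i) = Finset.Ico i n := by
      ext m; simp only [Finset.mem_filter, Finset.mem_range, Finset.mem_Ico]; omega
    rw [this, Nat.card_Ico]
  calc ((n - i : ℕ) : ℝ) * ∑ π ∈ A, g π * h (π j)
      = ∑ _k ∈ Finset.univ.filter (fun v : Fin n => ¬ (v : ℕ) < i),
          ∑ π ∈ A, g π * h (π j) := by
        rw [Finset.sum_const, hcard, nsmul_eq_mul]
    _ = ∑ k ∈ Finset.univ.filter (fun v : Fin n => ¬ (v : ℕ) < i),
          ∑ π ∈ A, g π * h (π k) := by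
        refine Finset.sum_congr rfl fun k hk => ?_
        have hk' : i ≤ (k : ℕ) := by
          simp only [Finset.mem_filter, Finset.mem_univ, true_and] at hk; omega
        exact sum_swap_pos h A g i hA hg j k hj hk'
    _ = ∑ π ∈ A, ∑ k ∈ Finset.univ.filter (fun v : Fin n => ¬ (v : ℕ) < i),
          g π * h (π k) := Finset.sum_comm
    _ = ∑ π ∈ A, g π *
          ((∑ v, h v) - ∑ v ∈ Finset.univ.filter (fun v : Fin n => (v : ℕ) < i), h (π v)) := by
        refine Finset.sum_congr rfl fun π _ => ?_
        rw [htail π, Finset.mul_sum]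

private lemma sum_marginal {n : ℕ} (h : Fin n → ℝ) (j : Fin n) :
    (n : ℝ) * ∑ π : Perm (Fin n), h (π j)
      = (Fintype.card (Perm (Fin n)) : ℝ) * ∑ v, h v := by
  have := sum_tail_pos h Finset.univ (fun _ => 1) 0
    (fun _ σ _ _ => Finset.mem_univ σ) (fun _ _ _ => rfl) j (Nat.zero_le _)
  simp only [Nat.sub_zero, one_mul, Nat.not_lt_zero, Finset.filter_false,
    Finset.sum_empty, sub_zero, Finset.sum_const, Finset.card_univ, nsmul_eq_mul] at this
  rw [this, mul_comm]

private lemma sum_pair_tot {n : ℕ} (f : Fin n → ℝ) (j k : Fin n) (hjk : j ≠ k) :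
    (n : ℝ) * ((n : ℝ) - 1) * ∑ π : Perm (Fin n), f (π j) * f (π k)
      = (Fintype.card (Perm (Fin n)) : ℝ) * ((∑ v, f v) ^ 2 - ∑ v, f v ^ 2) := by
  have hn1 : 1 ≤ n := Nat.one_le_iff_ne_zero.2 (by rintro rfl; exact absurd j.2 (Nat.not_lt_zero _))
  set T : ℝ := ∑ v, f v with hT
  set Q : ℝ := ∑ v, f v ^ 2 with hQ
  set C : ℝ := ∑ π : Perm (Fin n), f (π j) * f (π k) with hC
  have eqA : ∑ j' : Fin n, ∑ k' ∈ Finset.univ.erase j',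
      (∑ π : Perm (Fin n), f (π j') * f (π k')) = (n : ℝ) * ((n : ℝ) - 1) * C := by
    have hinner : ∀ j' : Fin n, ∑ k' ∈ Finset.univ.erase j',
        (∑ π : Perm (Fin n), f (π j') * f (π k')) = ((n : ℝ) - 1) * C := by
      intro j'
      have : ∀ k' ∈ Finset.univ.erase j',
          (∑ π : Perm (Fin n), f (π j') * f (π k')) = C := by
        intro k' hk'
        exact sum_pair_eq f j' k' j k ((Finset.mem_erase.1 hk').1.symm) hjk
      rw [Finset.sum_congr rfl this, Finset.sum_const,
        Finset.card_erase_of_mem (Finset.mem_univ _), Finset.card_univ, Fintype.card_fin,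
        nsmul_eq_mul, Nat.cast_sub hn1, Nat.cast_one]
    rw [Finset.sum_congr rfl (fun j' _ => hinner j'), Finset.sum_const, Finset.card_univ,
      Fintype.card_fin, nsmul_eq_mul]
    ring
  have eqB : ∑ j' : Fin n, ∑ k' ∈ Finset.univ.erase j',
      (∑ π : Perm (Fin n), f (π j') * f (π k'))
      = (Fintype.card (Perm (Fin n)) : ℝ) * (T ^ 2 - Q) := by
    have step1 : ∀ j' : Fin n, ∑ k' ∈ Finset.univ.erase j',
        (∑ π : Perm (Fin n), f (π j') * f (π k'))
        = ∑ π : Perm (Fin n), f (π j') * (T - f (π j')) := by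
      intro j'
      rw [Finset.sum_comm]
      refine Finset.sum_congr rfl fun π _ => ?_
      rw [← Finset.mul_sum, Finset.sum_erase_eq_sub (Finset.mem_univ j'),
        Equiv.sum_comp π f]
    rw [Finset.sum_congr rfl (fun j' _ => step1 j'), Finset.sum_comm]
    have step2 : ∀ π : Perm (Fin n),
        ∑ j' : Fin n, f (π j') * (T - f (π j')) = T ^ 2 - Q := by
      intro π
      have epw : ∀ j' : Fin n, f (π j') * (T - f (π j'))
          = f (π j') * T - f (π j') ^ 2 := fun _ => by ring
      have e1 : ∑ j' : Fin n, f (π j') * (T - f (π j'))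
          = (∑ j' : Fin n, f (π j')) * T - ∑ j' : Fin n, f (π j') ^ 2 := by
        rw [Finset.sum_congr rfl (fun j' _ => epw j'), Finset.sum_sub_distrib,
          ← Finset.sum_mul]
      rw [e1, Equiv.sum_comp π f, Equiv.sum_comp π (fun v => f v ^ 2)]
      ring
    rw [Finset.sum_congr rfl (fun π _ => step2 π), Finset.sum_const, Finset.card_univ,
      nsmul_eq_mul]
  rw [← eqA, eqB]


set_option maxHeartbeats 2000000 in
open Classical in
/-- Truncated-sum model for sampling without replacement: under the uniform measure
on permutations, for every integer `1 ≤ s ≤ n/2` and all reals `ε > 0`, `a > 0`,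
`P(max_{0 ≤ i ≤ s} |i μ⁺ - R_i| > ε a) ≤ 16 s (σ⁺)² / (ε² a²)`. -/
theorem stmt10 {n : ℕ} (hn : 1 ≤ n) (t : ℕ) (c : Fin n → ℕ)
    (R : ℕ → Equiv.Perm (Fin n) → ℝ)
    (hR0 : ∀ π, R 0 π = 0)
    (hRstep : ∀ i (hi : i < n) (π : Equiv.Perm (Fin n)),
      R (i + 1) π = R i π +
        (if t + 1 ≤ c (π ⟨i, hi⟩) then (c (π ⟨i, hi⟩) : ℝ) - 1 else 0))
    (μplus : ℝ)
    (hμplus : μplus = (∑ j : Fin n, if t + 1 ≤ c j then (c j : ℝ) - 1 else 0) / n)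
    (σplus2 : ℝ)
    (hσplus2 : σplus2 =
      (∑ j : Fin n, if t + 1 ≤ c j then (c j : ℝ) * ((c j : ℝ) - 1) else 0) / n)
    (s : ℕ) (hs1 : 1 ≤ s) (hs2 : 2 * s ≤ n)
    (ε a : ℝ) (hε : 0 < ε) (ha : 0 < a) :
    ((Finset.univ.filter (fun π : Equiv.Perm (Fin n) =>
        ∃ i ≤ s, ε * a < |(i : ℝ) * μplus - R i π|)).card : ℝ) /
        (Nat.factorial n : ℝ)
      ≤ 16 * (s : ℝ) * σplus2 / (ε ^ 2 * a ^ 2) := by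
  classical
  have hn2 : 2 ≤ n := le_trans (by omega) hs2
  have hsn : s ≤ n := by omega
  have hnR : (0:ℝ) < n := by exact_mod_cast Nat.lt_of_lt_of_le Nat.zero_lt_one hn
  set f : Fin n → ℝ := fun v => if t + 1 ≤ c v then (c v : ℝ) - 1 else 0 with hf
  set S : ℕ → Equiv.Perm (Fin n) → ℝ :=
    fun i π => ∑ v ∈ Finset.univ.filter (fun v : Fin n => (v : ℕ) < i), f (π v) with hS
  have hSdef : ∀ (i : ℕ) (π : Equiv.Perm (Fin n)),
      S i π = ∑ v ∈ Finset.univ.filter (fun v : Fin n => (v : ℕ) < i), f (π v) :=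
    fun i π => rfl
  set T : ℝ := ∑ v, f v with hT
  set Q : ℝ := ∑ v, (f v) ^ 2 with hQ
  set N : ℝ := (Nat.factorial n : ℝ) with hN
  have hNpos : 0 < N := by rw [hN]; exact_mod_cast Nat.factorial_pos n
  have hNcard : ((Fintype.card (Equiv.Perm (Fin n))) : ℝ) = N := by
    rw [hN, Fintype.card_perm, Fintype.card_fin]
  -- translate marginal lemmas
  have marg : ∀ (h : Fin n → ℝ) (j : Fin n),
      (n : ℝ) * ∑ π : Equiv.Perm (Fin n), h (π j) = N * ∑ v, h v := by
    intro h j; rw [← hNcard]; exact sum_marginal h j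
  have pairtot : ∀ (j k : Fin n), j ≠ k →
      (n : ℝ) * ((n : ℝ) - 1) * ∑ π : Equiv.Perm (Fin n), f (π j) * f (π k)
        = N * (T ^ 2 - Q) := by
    intro j k hjk; rw [← hNcard, hT, hQ]; exact sum_pair_tot f j k hjk
  clear_value f S T Q N
  -- basic facts on f, T, Q
  have hfnn : ∀ v, 0 ≤ f v := by
    intro v; rw [hf]; dsimp only; split_ifs with h
    · have : (1:ℝ) ≤ (c v : ℝ) := by exact_mod_cast le_trans (by omega) h
      linarith
    · exact le_refl 0
  have hμT : T = (n : ℝ) * μplus := by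
    rw [hμplus]; field_simp
  have hQnn : 0 ≤ Q := by rw [hQ]; exact Finset.sum_nonneg fun v _ => sq_nonneg _
  have hσnn : 0 ≤ σplus2 := by
    rw [hσplus2]
    apply div_nonneg _ (le_of_lt hnR)
    apply Finset.sum_nonneg
    intro v _
    split_ifs with h
    · have h1 : (1:ℝ) ≤ (c v : ℝ) := by exact_mod_cast le_trans (by omega) h
      nlinarith
    · exact le_refl 0
  have hQσ : Q ≤ (n : ℝ) * σplus2 := by
    have hrhs : (n : ℝ) * σplus2
        = ∑ j : Fin n, (if t + 1 ≤ c j then (c j : ℝ) * ((c j : ℝ) - 1) else 0) := by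
      rw [hσplus2]; field_simp
    rw [hrhs, hQ]
    apply Finset.sum_le_sum
    intro v _
    rw [hf]; dsimp only; split_ifs with h
    · have h1 : (1:ℝ) ≤ (c v : ℝ) := by exact_mod_cast le_trans (by omega) h
      nlinarith
    · simp
  -- S basic lemmas
  have hS0 : ∀ π, S 0 π = 0 := by
    intro π; rw [hSdef]; simp
  have hSstep : ∀ (i : ℕ) (hi : i < n) (π : Equiv.Perm (Fin n)),
      S (i + 1) π = S i π + f (π ⟨i, hi⟩) := by
    intro i hi π
    rw [hSdef, hSdef]
    have hins : (Finset.univ.filter (fun v : Fin n => (v : ℕ) < i + 1))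
        = insert (⟨i, hi⟩ : Fin n) (Finset.univ.filter (fun v : Fin n => (v : ℕ) < i)) := by
      ext v
      simp only [Finset.mem_filter, Finset.mem_univ, true_and, Finset.mem_insert, Fin.ext_iff]
      omega
    rw [hins, Finset.sum_insert (by simp)]
    ring
  have hRS : ∀ i, i ≤ n → ∀ π, R i π = S i π := by
    intro i
    induction i with
    | zero => intro _ π; rw [hR0, hS0]
    | succ i ih =>
      intro hi π
      have hi' : i < n := hi
      rw [hRstep i hi' π, ih (le_of_lt hi') π, hSstep i hi' π, hf]
  have hSdep : ∀ (i : ℕ) (π σ : Equiv.Perm (Fin n)),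
      (∀ m : Fin n, (m : ℕ) < i → π m = σ m) → S i π = S i σ := by
    intro i π σ hag
    rw [hSdef, hSdef]
    refine Finset.sum_congr rfl fun v hv => ?_
    rw [hag v (by simpa using hv)]
  have hcardP : ∀ i, i ≤ n →
      (Finset.univ.filter (fun v : Fin n => (v : ℕ) < i)).card = i := by
    intro i hi
    rw [card_filter_fin n (fun m => m < i)]
    have : (Finset.range n).filter (fun m => m < i) = Finset.range i := by
      ext m; simp only [Finset.mem_filter, Finset.mem_range]; omega
    rw [this, Finset.card_range]
  -- variance identities
  have e2 : (n : ℝ) * ∑ π : Equiv.Perm (Fin n), S s π = (s : ℝ) * N * T := by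
    have h1 : ∑ π : Equiv.Perm (Fin n), S s π
        = ∑ v ∈ Finset.univ.filter (fun v : Fin n => (v : ℕ) < s),
            ∑ π : Equiv.Perm (Fin n), f (π v) := by
      calc ∑ π : Equiv.Perm (Fin n), S s π
          = ∑ π : Equiv.Perm (Fin n), ∑ v ∈ Finset.univ.filter (fun v : Fin n => (v : ℕ) < s),
              f (π v) := Finset.sum_congr rfl (fun π _ => hSdef s π)
        _ = _ := Finset.sum_comm
    rw [h1, Finset.mul_sum]
    rw [Finset.sum_congr rfl (fun v _ => marg f v)]
    rw [Finset.sum_const, hcardP s hsn, nsmul_eq_mul]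
    rw [hT]; ring
  have e1 : (n : ℝ) * ((n : ℝ) - 1) * ∑ π : Equiv.Perm (Fin n), (S s π) ^ 2
      = ((n : ℝ) - 1) * (s : ℝ) * N * Q + (s : ℝ) * ((s : ℝ) - 1) * N * (T ^ 2 - Q) := by
    set Ps := Finset.univ.filter (fun v : Fin n => (v : ℕ) < s) with hPs
    have expand : ∑ π : Equiv.Perm (Fin n), (S s π) ^ 2
        = ∑ v ∈ Ps, (∑ π : Equiv.Perm (Fin n), f (π v) ^ 2)
          + ∑ v ∈ Ps, ∑ w ∈ Ps.erase v, (∑ π : Equiv.Perm (Fin n), f (π v) * f (π w)) := by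
      have h1 : ∀ π : Equiv.Perm (Fin n), (S s π) ^ 2
          = ∑ v ∈ Ps, (f (π v) ^ 2 + ∑ w ∈ Ps.erase v, f (π v) * f (π w)) := by
        intro π
        rw [hSdef, ← hPs, sq, Finset.sum_mul_sum]
        refine Finset.sum_congr rfl fun v hv => ?_
        rw [← Finset.add_sum_erase _ _ hv, ← sq]
      rw [Finset.sum_congr rfl (fun π _ => h1 π), Finset.sum_comm, ← Finset.sum_add_distrib]
      refine Finset.sum_congr rfl fun v hv => ?_
      rw [Finset.sum_add_distrib, Finset.sum_comm]
    rw [expand, mul_add, Finset.mul_sum, Finset.mul_sum]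
    have hterm1 : ∀ v ∈ Ps, (n : ℝ) * ((n : ℝ) - 1) * ∑ π : Equiv.Perm (Fin n), f (π v) ^ 2
        = ((n : ℝ) - 1) * (N * Q) := by
      intro v _
      have := marg (fun u => f u ^ 2) v
      rw [← hQ] at this
      calc (n : ℝ) * ((n : ℝ) - 1) * ∑ π : Equiv.Perm (Fin n), f (π v) ^ 2
          = ((n : ℝ) - 1) * ((n : ℝ) * ∑ π : Equiv.Perm (Fin n), f (π v) ^ 2) := by ring
        _ = ((n : ℝ) - 1) * (N * Q) := by rw [this]
    have hterm2 : ∀ v ∈ Ps, (n : ℝ) * ((n : ℝ) - 1) *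
          ∑ w ∈ Ps.erase v, (∑ π : Equiv.Perm (Fin n), f (π v) * f (π w))
        = ((s : ℝ) - 1) * (N * (T ^ 2 - Q)) := by
      intro v hv
      rw [Finset.mul_sum]
      have hc : ∀ w ∈ Ps.erase v,
          (n : ℝ) * ((n : ℝ) - 1) * ∑ π : Equiv.Perm (Fin n), f (π v) * f (π w)
          = N * (T ^ 2 - Q) := by
        intro w hw
        exact pairtot v w (Finset.ne_of_mem_erase hw).symm
      rw [Finset.sum_congr rfl hc, Finset.sum_const, Finset.card_erase_of_mem hv,
        hPs, hcardP s hsn, nsmul_eq_mul, Nat.cast_sub hs1, Nat.cast_one]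
    rw [Finset.sum_congr rfl hterm1, Finset.sum_congr rfl hterm2]
    rw [Finset.sum_const, Finset.sum_const, hcardP s hsn, nsmul_eq_mul, nsmul_eq_mul]
    ring
  have hcs : T ^ 2 ≤ (n : ℝ) * Q := by
    rw [hT, hQ]
    have := sq_sum_le_card_mul_sum_sq (s := (Finset.univ : Finset (Fin n))) (f := f)
    simpa [Finset.card_univ] using this
  set X : Equiv.Perm (Fin n) → ℝ := fun π => S s π - (s : ℝ) * μplus with hX
  clear_value X
  have e0 : ∑ π : Equiv.Perm (Fin n), (X π) ^ 2
      = ∑ π : Equiv.Perm (Fin n), (S s π) ^ 2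
        - 2 * ((s : ℝ) * μplus) * ∑ π : Equiv.Perm (Fin n), S s π
        + N * ((s : ℝ) * μplus) ^ 2 := by
    have h1 : ∀ π : Equiv.Perm (Fin n), (X π) ^ 2
        = (S s π) ^ 2 - 2 * ((s : ℝ) * μplus) * (S s π) + ((s : ℝ) * μplus) ^ 2 := by
      intro π; rw [hX]; ring
    rw [Finset.sum_congr rfl (fun π _ => h1 π), Finset.sum_add_distrib,
      Finset.sum_sub_distrib, ← Finset.mul_sum, Finset.sum_const, Finset.card_univ,
      nsmul_eq_mul, hNcard]
  have vb : (n : ℝ) * ∑ π : Equiv.Perm (Fin n), (X π) ^ 2 ≤ N * (s : ℝ) * Q := by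
    have hn1R : (0:ℝ) < (n : ℝ) - 1 := by
      have : (2:ℝ) ≤ (n : ℝ) := by exact_mod_cast hn2
      linarith
    have hQμ : (n : ℝ) * μplus ^ 2 ≤ Q := by
      have h1 : ((n : ℝ) * μplus) ^ 2 ≤ (n : ℝ) * Q := by rw [← hμT]; exact hcs
      nlinarith
    have hsR : (1:ℝ) ≤ (s : ℝ) := by exact_mod_cast hs1
    have E : ((n : ℝ) - 1) * ((n : ℝ) * ∑ π : Equiv.Perm (Fin n), (X π) ^ 2)
        = ((n : ℝ) - 1) * (s : ℝ) * N * Q + (s : ℝ) * ((s : ℝ) - 1) * N * (T ^ 2 - Q)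
          - 2 * (s : ℝ) * μplus * ((n : ℝ) - 1) * ((s : ℝ) * N * T)
          + ((n : ℝ) - 1) * (n : ℝ) * N * ((s : ℝ) * μplus) ^ 2 := by
      linear_combination ((n : ℝ) - 1) * (n : ℝ) * e0 + e1
        - 2 * (s : ℝ) * μplus * ((n : ℝ) - 1) * e2
    rw [hμT] at E
    have key : ((n : ℝ) - 1) * ((n : ℝ) * ∑ π : Equiv.Perm (Fin n), (X π) ^ 2)
        ≤ ((n : ℝ) - 1) * (N * (s : ℝ) * Q) := by
      rw [E]
      have h1 : 0 ≤ (s : ℝ) * ((s : ℝ) - 1) * N * (Q - (n : ℝ) * μplus ^ 2) :=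
        mul_nonneg (mul_nonneg (mul_nonneg (by linarith) (by linarith)) hNpos.le)
          (by linarith)
      have h2 : 0 ≤ (s : ℝ) * N * (n : ℝ) * ((n : ℝ) - 1) * μplus ^ 2 :=
        mul_nonneg (mul_nonneg (mul_nonneg (mul_nonneg (by linarith) hNpos.le)
          (by linarith)) (by linarith)) (sq_nonneg μplus)
      linarith only [h1, h2]
    exact le_of_mul_le_mul_left key hn1R
  -- events
  set lam : ℝ := ε * a with hlam
  have hlampos : 0 < lam := mul_pos hε ha
  set A : ℕ → Finset (Equiv.Perm (Fin n)) := fun i =>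
    Finset.univ.filter (fun π => lam < |S i π - (i : ℝ) * μplus| ∧
      ∀ m < i, |S m π - (m : ℝ) * μplus| ≤ lam) with hA
  have hmemA : ∀ (i : ℕ) (π : Equiv.Perm (Fin n)), π ∈ A i ↔
      (lam < |S i π - (i : ℝ) * μplus| ∧ ∀ m < i, |S m π - (m : ℝ) * μplus| ≤ lam) := by
    intro i π; rw [hA]; simp only [Finset.mem_filter, Finset.mem_univ, true_and]
  clear_value A
  have hBsub : (Finset.univ.filter (fun π : Equiv.Perm (Fin n) =>
      ∃ i ≤ s, lam < |(i : ℝ) * μplus - R i π|)) ⊆ (Finset.Icc 1 s).biUnion A := by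
    intro π hπ
    rw [Finset.mem_filter] at hπ
    obtain ⟨-, i, his, hib⟩ := hπ
    have hib' : lam < |S i π - (i : ℝ) * μplus| := by
      rw [abs_sub_comm, hRS i (le_trans his hsn) π] at hib
      exact hib
    have hP : ∃ m, m ≤ s ∧ lam < |S m π - (m : ℝ) * μplus| := ⟨i, his, hib'⟩
    set i0 := Nat.find hP with hi0
    have hspec : i0 ≤ s ∧ lam < |S i0 π - (i0 : ℝ) * μplus| := Nat.find_spec hP
    have hmin : ∀ m, m < i0 → ¬ (m ≤ s ∧ lam < |S m π - (m : ℝ) * μplus|) :=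
      fun m hm => Nat.find_min hP hm
    have hi0pos : 1 ≤ i0 := by
      by_contra hcon
      have h0 : i0 = 0 := by omega
      have h2 := hspec.2
      rw [h0] at h2
      rw [hS0 π] at h2
      simp at h2
      linarith
    refine Finset.mem_biUnion.2 ⟨i0, Finset.mem_Icc.2 ⟨hi0pos, hspec.1⟩, ?_⟩
    rw [hmemA]
    refine ⟨hspec.2, fun m hm => ?_⟩
    have hms : m ≤ s := le_trans (le_of_lt hm) hspec.1
    by_contra hcon
    push_neg at hcon
    exact hmin m hm ⟨hms, hcon⟩
  have hdisj : ∀ i ∈ Finset.Icc 1 s, ∀ j ∈ Finset.Icc 1 s, i ≠ j → Disjoint (A i) (A j) := by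
    have hgen : ∀ i j, i < j → Disjoint (A i) (A j) := by
      intro i j hij
      rw [Finset.disjoint_left]
      intro π hπi hπj
      rw [hmemA] at hπi hπj
      exact absurd hπi.1 (not_lt.2 (hπj.2 i hij))
    intro i _ j _ hij
    rcases Nat.lt_or_ge i j with h | h
    · exact hgen i j h
    · exact (hgen j i (by omega)).symm
  -- per-i key inequality
  have key : ∀ i, 1 ≤ i → i ≤ s →
      ((A i).card : ℝ) * (lam ^ 2 * ((n : ℝ) - s) ^ 2)
        ≤ (n : ℝ) ^ 2 * ∑ π ∈ A i, (X π) ^ 2 := by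
    intro i hi1 his
    have hin : i ≤ n := le_trans his hsn
    have hiR : (i : ℝ) ≤ (s : ℝ) := by exact_mod_cast his
    have hsnR : (s : ℝ) ≤ (n : ℝ) := by exact_mod_cast hsn
    have hAdep : ∀ π σ : Equiv.Perm (Fin n),
        (∀ m : Fin n, (m : ℕ) < i → π m = σ m) → π ∈ A i → σ ∈ A i := by
      intro π σ hag hπ
      rw [hmemA] at hπ ⊢
      have h1 : S i σ = S i π := (hSdep i π σ hag).symm
      refine ⟨by rw [h1]; exact hπ.1, fun m hm => ?_⟩
      have h2 : S m σ = S m π :=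
        (hSdep m π σ (fun v hv => hag v (lt_of_lt_of_le hv (le_of_lt hm)))).symm
      rw [h2]; exact hπ.2 m hm
    set g : Equiv.Perm (Fin n) → ℝ := fun π => S i π - (i : ℝ) * μplus with hg
    clear_value g
    have hgdep : ∀ π σ : Equiv.Perm (Fin n),
        (∀ m : Fin n, (m : ℕ) < i → π m = σ m) → g π = g σ := by
      intro π σ hag; rw [hg]; dsimp only; rw [hSdep i π σ hag]
    have htail : ∀ j : Fin n, i ≤ (j : ℕ) →
        ((n - i : ℕ) : ℝ) * ∑ π ∈ A i, g π * f (π j)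
          = ∑ π ∈ A i, g π * (T - S i π) := by
      intro j hj
      have h3 := sum_tail_pos f (A i) g i hAdep hgdep j hj
      rw [← hT] at h3
      calc ((n - i : ℕ) : ℝ) * ∑ π ∈ A i, g π * f (π j)
          = ∑ π ∈ A i, g π * (T - ∑ v ∈ Finset.univ.filter
              (fun v : Fin n => (v : ℕ) < i), f (π v)) := h3
        _ = ∑ π ∈ A i, g π * (T - S i π) :=
            Finset.sum_congr rfl fun π _ => by rw [← hSdef]
    set J := Finset.univ.filter (fun v : Fin n => (v : ℕ) < s ∧ ¬ (v : ℕ) < i) with hJ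
    have hsplit : ∀ π : Equiv.Perm (Fin n), S s π = S i π + ∑ v ∈ J, f (π v) := by
      intro π
      have h0 := Finset.sum_filter_add_sum_filter_not
        (Finset.univ.filter fun v : Fin n => (v : ℕ) < s)
        (fun v => (v : ℕ) < i) (fun v => f (π v))
      rw [Finset.filter_filter, Finset.filter_filter] at h0
      have hPi : Finset.univ.filter (fun v : Fin n => (v : ℕ) < s ∧ (v : ℕ) < i)
          = Finset.univ.filter (fun v : Fin n => (v : ℕ) < i) := by
        ext v
        simp only [Finset.mem_filter, Finset.mem_univ, true_and]
        omega
      rw [hPi] at h0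
      rw [hSdef s π, hSdef i π, hJ]
      linarith [h0]
    have hcardJ : ((J.card : ℕ) : ℝ) = (s : ℝ) - (i : ℝ) := by
      rw [hJ, card_filter_fin n (fun m => m < s ∧ ¬ m < i)]
      have h4 : (Finset.range n).filter (fun m => m < s ∧ ¬ m < i) = Finset.Ico i s := by
        ext m
        simp only [Finset.mem_filter, Finset.mem_range, Finset.mem_Ico]
        omega
      rw [h4, Nat.card_Ico, Nat.cast_sub his]
    have hmemJ : ∀ v ∈ J, i ≤ (v : ℕ) := by
      intro v hv
      rw [hJ, Finset.mem_filter] at hv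
      omega
    have hni : ((n - i : ℕ) : ℝ) = (n : ℝ) - (i : ℝ) := by rw [Nat.cast_sub hin]
    have hI : ((n : ℝ) - i) * ∑ π ∈ A i, g π * S s π
        = ((n : ℝ) - i) * ∑ π ∈ A i, g π * S i π
          + ((s : ℝ) - i) * ∑ π ∈ A i, g π * (T - S i π) := by
      calc ((n : ℝ) - i) * ∑ π ∈ A i, g π * S s π
          = ((n : ℝ) - i) * ∑ π ∈ A i, (g π * S i π + ∑ v ∈ J, g π * f (π v)) := by
            congr 1
            refine Finset.sum_congr rfl fun π _ => ?_
            rw [hsplit π, mul_add, Finset.mul_sum]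
        _ = ((n : ℝ) - i) * ∑ π ∈ A i, g π * S i π
            + ((n : ℝ) - i) * ∑ π ∈ A i, ∑ v ∈ J, g π * f (π v) := by
            rw [Finset.sum_add_distrib, mul_add]
        _ = ((n : ℝ) - i) * ∑ π ∈ A i, g π * S i π
            + ∑ v ∈ J, (((n : ℝ) - i) * ∑ π ∈ A i, g π * f (π v)) := by
            simp only [Finset.mul_sum]
            rw [Finset.sum_comm]
        _ = ((n : ℝ) - i) * ∑ π ∈ A i, g π * S i π
            + ∑ v ∈ J, ∑ π ∈ A i, g π * (T - S i π) := by
            congr 1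
            refine Finset.sum_congr rfl fun v hv => ?_
            rw [← hni]
            exact htail v (hmemJ v hv)
        _ = ((n : ℝ) - i) * ∑ π ∈ A i, g π * S i π
            + ((s : ℝ) - i) * ∑ π ∈ A i, g π * (T - S i π) := by
            rw [Finset.sum_const, nsmul_eq_mul, hcardJ]
    have h1 : ((n : ℝ) - i) * ∑ π ∈ A i, g π * X π
        = ((n : ℝ) - s) * ∑ π ∈ A i, (g π) ^ 2 := by
      have hpt : ∀ π ∈ A i,
          ((n : ℝ) - i) * (g π * S i π) + ((s : ℝ) - i) * (g π * (T - S i π))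
            - ((n : ℝ) - i) * ((s : ℝ) * μplus * g π) = ((n : ℝ) - s) * (g π) ^ 2 := by
        intro π _
        rw [hμT, hg]
        dsimp only
        ring
      calc ((n : ℝ) - i) * ∑ π ∈ A i, g π * X π
          = ((n : ℝ) - i) * ∑ π ∈ A i, (g π * S s π - (s : ℝ) * μplus * g π) := by
            congr 1
            refine Finset.sum_congr rfl fun π _ => ?_
            rw [hX]; dsimp only; ring
        _ = ((n : ℝ) - i) * ∑ π ∈ A i, g π * S s π
            - ((n : ℝ) - i) * ∑ π ∈ A i, (s : ℝ) * μplus * g π := by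
            rw [Finset.sum_sub_distrib, mul_sub]
        _ = (((n : ℝ) - i) * ∑ π ∈ A i, g π * S i π
            + ((s : ℝ) - i) * ∑ π ∈ A i, g π * (T - S i π))
            - ((n : ℝ) - i) * ∑ π ∈ A i, (s : ℝ) * μplus * g π := by rw [hI]
        _ = ∑ π ∈ A i, (((n : ℝ) - i) * (g π * S i π)
            + ((s : ℝ) - i) * (g π * (T - S i π))
            - ((n : ℝ) - i) * ((s : ℝ) * μplus * g π)) := by
            rw [Finset.sum_sub_distrib, Finset.sum_add_distrib]
            simp only [← Finset.mul_sum]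
        _ = ∑ π ∈ A i, ((n : ℝ) - s) * (g π) ^ 2 := Finset.sum_congr rfl hpt
        _ = ((n : ℝ) - s) * ∑ π ∈ A i, (g π) ^ 2 := by rw [← Finset.mul_sum]
    -- quadratic expansion
    have h2 : (0:ℝ) ≤ ∑ π ∈ A i, (((n : ℝ) - i) * X π - ((n : ℝ) - s) * g π) ^ 2 :=
      Finset.sum_nonneg fun π _ => sq_nonneg _
    have h5 : ∑ π ∈ A i, (((n : ℝ) - i) * X π - ((n : ℝ) - s) * g π) ^ 2
        = ((n : ℝ) - i) ^ 2 * ∑ π ∈ A i, (X π) ^ 2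
          - 2 * ((n : ℝ) - s) * (((n : ℝ) - i) * ∑ π ∈ A i, g π * X π)
          + ((n : ℝ) - s) ^ 2 * ∑ π ∈ A i, (g π) ^ 2 := by
      have hpt2 : ∀ π ∈ A i, (((n : ℝ) - i) * X π - ((n : ℝ) - s) * g π) ^ 2
          = ((n : ℝ) - i) ^ 2 * (X π) ^ 2
            - 2 * ((n : ℝ) - s) * (((n : ℝ) - i) * (g π * X π))
            + ((n : ℝ) - s) ^ 2 * (g π) ^ 2 := fun π _ => by ring
      rw [Finset.sum_congr rfl hpt2, Finset.sum_add_distrib, Finset.sum_sub_distrib,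
        ← Finset.mul_sum, ← Finset.mul_sum, ← Finset.mul_sum, ← Finset.mul_sum]
    have h1' : 2 * ((n : ℝ) - s) * (((n : ℝ) - i) * ∑ π ∈ A i, g π * X π)
        = 2 * ((n : ℝ) - s) * (((n : ℝ) - s) * ∑ π ∈ A i, (g π) ^ 2) := by rw [h1]
    have hquad : ((n : ℝ) - s) ^ 2 * ∑ π ∈ A i, (g π) ^ 2
        ≤ ((n : ℝ) - i) ^ 2 * ∑ π ∈ A i, (X π) ^ 2 := by
      linarith only [h2, h5, h1']
    have hglb : ((A i).card : ℝ) * lam ^ 2 ≤ ∑ π ∈ A i, (g π) ^ 2 := by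
      have hper : ∀ π ∈ A i, lam ^ 2 ≤ (g π) ^ 2 := by
        intro π hπ
        rw [hmemA] at hπ
        have h6 : lam ≤ |g π| := le_of_lt (by rw [hg]; exact hπ.1)
        calc lam ^ 2 ≤ |g π| ^ 2 := by
              apply pow_le_pow_left₀ hlampos.le h6
          _ = (g π) ^ 2 := sq_abs _
      calc ((A i).card : ℝ) * lam ^ 2 = (A i).card • lam ^ 2 := (nsmul_eq_mul _ _).symm
        _ ≤ ∑ π ∈ A i, (g π) ^ 2 := Finset.card_nsmul_le_sum _ _ _ hper
    have hXnn : (0:ℝ) ≤ ∑ π ∈ A i, (X π) ^ 2 := Finset.sum_nonneg fun π _ => sq_nonneg _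
    have hni2 : ((n : ℝ) - i) ^ 2 ≤ (n : ℝ) ^ 2 := by
      have hiRnn : (0:ℝ) ≤ (i : ℝ) := Nat.cast_nonneg i
      nlinarith [hiRnn, hnR]
    calc ((A i).card : ℝ) * (lam ^ 2 * ((n : ℝ) - s) ^ 2)
        = ((n : ℝ) - s) ^ 2 * (((A i).card : ℝ) * lam ^ 2) := by ring
      _ ≤ ((n : ℝ) - s) ^ 2 * ∑ π ∈ A i, (g π) ^ 2 :=
          mul_le_mul_of_nonneg_left hglb (sq_nonneg _)
      _ ≤ ((n : ℝ) - i) ^ 2 * ∑ π ∈ A i, (X π) ^ 2 := hquad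
      _ ≤ (n : ℝ) ^ 2 * ∑ π ∈ A i, (X π) ^ 2 :=
          mul_le_mul_of_nonneg_right hni2 hXnn
  -- final assembly
  set Bc : ℕ := (Finset.univ.filter (fun π : Equiv.Perm (Fin n) =>
      ∃ i ≤ s, lam < |(i : ℝ) * μplus - R i π|)).card with hBc
  have hdisj' : Set.PairwiseDisjoint ↑(Finset.Icc 1 s) A := by
    intro i hi j hj hij
    exact hdisj i (Finset.mem_coe.1 hi) j (Finset.mem_coe.1 hj) hij
  have hBcard : ((Bc : ℕ) : ℝ) ≤ ∑ i ∈ Finset.Icc 1 s, ((A i).card : ℝ) := by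
    have h7 := Finset.card_le_card hBsub
    have h8 : ((Finset.Icc 1 s).biUnion A).card = ∑ i ∈ Finset.Icc 1 s, (A i).card :=
      Finset.card_biUnion hdisj
    rw [h8] at h7
    rw [hBc]
    exact_mod_cast h7
  have hsum1 : ∑ i ∈ Finset.Icc 1 s, (((A i).card : ℝ) * (lam ^ 2 * ((n : ℝ) - s) ^ 2))
      ≤ (n : ℝ) ^ 2 * ∑ π : Equiv.Perm (Fin n), (X π) ^ 2 := by
    calc ∑ i ∈ Finset.Icc 1 s, (((A i).card : ℝ) * (lam ^ 2 * ((n : ℝ) - s) ^ 2))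
        ≤ ∑ i ∈ Finset.Icc 1 s, (n : ℝ) ^ 2 * ∑ π ∈ A i, (X π) ^ 2 :=
          Finset.sum_le_sum fun i hi =>
            key i (Finset.mem_Icc.1 hi).1 (Finset.mem_Icc.1 hi).2
      _ = (n : ℝ) ^ 2 * ∑ i ∈ Finset.Icc 1 s, ∑ π ∈ A i, (X π) ^ 2 := by
          rw [Finset.mul_sum]
      _ = (n : ℝ) ^ 2 * ∑ π ∈ (Finset.Icc 1 s).biUnion A, (X π) ^ 2 := by
          rw [Finset.sum_biUnion hdisj']
      _ ≤ (n : ℝ) ^ 2 * ∑ π : Equiv.Perm (Fin n), (X π) ^ 2 := by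
          apply mul_le_mul_of_nonneg_left _ (by positivity)
          exact Finset.sum_le_sum_of_subset_of_nonneg (Finset.subset_univ _)
            (fun π _ _ => sq_nonneg _)
  have hv1 : (n : ℝ) ^ 2 * ∑ π : Equiv.Perm (Fin n), (X π) ^ 2
      ≤ (n : ℝ) * (N * (s : ℝ) * Q) := by
    have h12 := mul_le_mul_of_nonneg_left vb hnR.le
    calc (n : ℝ) ^ 2 * ∑ π : Equiv.Perm (Fin n), (X π) ^ 2
        = (n : ℝ) * ((n : ℝ) * ∑ π : Equiv.Perm (Fin n), (X π) ^ 2) := by ring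
      _ ≤ (n : ℝ) * (N * (s : ℝ) * Q) := h12
  have hv2 : (n : ℝ) * (N * (s : ℝ) * Q) ≤ (n : ℝ) ^ 2 * (N * (s : ℝ) * σplus2) := by
    have h9 : (0:ℝ) ≤ N * (s : ℝ) := mul_nonneg hNpos.le (Nat.cast_nonneg s)
    calc (n : ℝ) * (N * (s : ℝ) * Q) = (n : ℝ) * ((N * (s : ℝ)) * Q) := by ring
      _ ≤ (n : ℝ) * ((N * (s : ℝ)) * ((n : ℝ) * σplus2)) :=
          mul_le_mul_of_nonneg_left (mul_le_mul_of_nonneg_left hQσ h9) hnR.le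
      _ = (n : ℝ) ^ 2 * (N * (s : ℝ) * σplus2) := by ring
  have hns4 : (n : ℝ) ^ 2 ≤ 4 * ((n : ℝ) - s) ^ 2 := by
    have h10 : (n : ℝ) ≤ 2 * ((n : ℝ) - s) := by
      have h11 : (2 * s : ℝ) ≤ (n : ℝ) := by exact_mod_cast hs2
      linarith
    nlinarith [h10, hnR.le]
  have hv3 : (n : ℝ) ^ 2 * (N * (s : ℝ) * σplus2)
      ≤ 4 * ((n : ℝ) - s) ^ 2 * (N * (s : ℝ) * σplus2) :=
    mul_le_mul_of_nonneg_right hns4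
      (mul_nonneg (mul_nonneg hNpos.le (Nat.cast_nonneg s)) hσnn)
  have hfinal : ((Bc : ℕ) : ℝ) * (lam ^ 2 * ((n : ℝ) - s) ^ 2)
      ≤ 4 * ((n : ℝ) - s) ^ 2 * (N * (s : ℝ) * σplus2) := by
    calc ((Bc : ℕ) : ℝ) * (lam ^ 2 * ((n : ℝ) - s) ^ 2)
        ≤ (∑ i ∈ Finset.Icc 1 s, ((A i).card : ℝ)) * (lam ^ 2 * ((n : ℝ) - s) ^ 2) :=
          mul_le_mul_of_nonneg_right hBcard (by positivity)
      _ = ∑ i ∈ Finset.Icc 1 s, (((A i).card : ℝ) * (lam ^ 2 * ((n : ℝ) - s) ^ 2)) :=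
          Finset.sum_mul _ _ _
      _ ≤ (n : ℝ) ^ 2 * ∑ π : Equiv.Perm (Fin n), (X π) ^ 2 := hsum1
      _ ≤ (n : ℝ) * (N * (s : ℝ) * Q) := hv1
      _ ≤ (n : ℝ) ^ 2 * (N * (s : ℝ) * σplus2) := hv2
      _ ≤ 4 * ((n : ℝ) - s) ^ 2 * (N * (s : ℝ) * σplus2) := hv3
  have hnspos : (0:ℝ) < ((n : ℝ) - s) ^ 2 := by
    have h13 : (s : ℝ) < (n : ℝ) := by
      have : s < n := by omega
      exact_mod_cast this
    have : (0:ℝ) < (n : ℝ) - s := by linarith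
    positivity
  have hkey2 : ((Bc : ℕ) : ℝ) * lam ^ 2 ≤ 4 * (N * (s : ℝ) * σplus2) := by
    have h11 : (((Bc : ℕ) : ℝ) * lam ^ 2) * ((n : ℝ) - s) ^ 2
        ≤ (4 * (N * (s : ℝ) * σplus2)) * ((n : ℝ) - s) ^ 2 := by
      linarith [hfinal]
    exact le_of_mul_le_mul_right h11 hnspos
  rw [div_le_div_iff₀ hNpos (by positivity : (0:ℝ) < ε ^ 2 * a ^ 2)]
  have hlam2 : lam ^ 2 = ε ^ 2 * a ^ 2 := by rw [hlam]; ring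
  rw [← hlam2]
  have h14 : (0:ℝ) ≤ N * (s : ℝ) * σplus2 :=
    mul_nonneg (mul_nonneg hNpos.le (Nat.cast_nonneg s)) hσnn
  linarith only [hkey2, h14]
end
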